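/- arXiv:1910.08425 — 3 statements merged into one kernel-verified Lean document; each statement's English description precedes it below -/
import Mathlib

section
/- Let L > 0, γ > 0, β₂ > 0, let ρ : ℝ → ℝ be continuously differentiable with |ρ'(x)| ≤ β₂ for all x, let f : ℝ × [0,∞) → ℂ be continuous, and let u be a classical solution of i∂_t u + (1/2)∂_x²u + |u|²u = f − iγu on (−L,L)×(0,∞) with u(±L,t) = 0 for all t ≥ 0. Assume the uniform bounds: ∫_{−L}^{L} |∂_x u(x,t)|² dx ≤ R for all t ≥ 0, and ∫_{−L}^{L} ρ(x)²|f(x,t)|² dx ≤ S for all t ≥ 0. Then, with M₀ = (2/γ²)(Rβ₂² + S), the weighted mass satisfies ∫_{−L}^{L} ρ²|u(x,t)|² dx ≤ (∫_{−L}^{L} ρ²|u(x,0)|² dx)·e^{−γt} + M₀(1 − e^{−γt}) for all t ≥ 0; in particular ∫_{−L}^{L} ρ²|u(x,t)|² dx ≤ ∫_{−L}^{L} ρ²|u(x,0)|² dx + M₀ uniformly in t and L. -/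
open MeasureTheory


lemma norm_sq_complex (z : ℂ) : ‖z‖^2 = z.re * z.re + z.im * z.im := by
  rw [Complex.sq_norm, Complex.normSq_apply]

lemma re_I_mul_conj_self (z : ℂ) : (Complex.I * (starRingEnd ℂ) z * z).re = 0 := by
  simp [Complex.mul_re, Complex.mul_im]; ring

lemma hasDerivAt_normsq {w : ℝ → ℂ} {w' : ℂ} {t : ℝ} (h : HasDerivAt w w' t) :
    HasDerivAt (fun s => ‖w s‖^2) (2 * ((starRingEnd ℂ) (w t) * w').re) t := by
  have hre : HasDerivAt (fun s => (w s).re) w'.re t :=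
    Complex.reCLM.hasFDerivAt.comp_hasDerivAt t h
  have him : HasDerivAt (fun s => (w s).im) w'.im t :=
    Complex.imCLM.hasFDerivAt.comp_hasDerivAt t h
  have h2 := (hre.mul hre).add (him.mul him)
  have heq : (fun s => ‖w s‖^2) = fun s => (w s).re * (w s).re + (w s).im * (w s).im := by
    funext s; exact norm_sq_complex _
  rw [heq]
  refine HasDerivAt.congr_deriv h2 ?_
  simp [Complex.mul_re]
  ring

lemma conj_deriv {g : ℝ → ℂ} {g' : ℂ} {x : ℝ} (h : HasDerivAt g g' x) :
    HasDerivAt (fun y => (starRingEnd ℂ) (g y)) ((starRingEnd ℂ) g') x := by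
  simpa using h.star

lemma pde_pointwise (γr : ℝ) (c d e g : ℂ)
    (h : Complex.I * d + (1/2 : ℂ) * e + (‖c‖ : ℂ)^2 * c = g - Complex.I * (γr : ℂ) * c) :
    2 * ((starRingEnd ℂ) c * d).re
      = (Complex.I * (starRingEnd ℂ) c * e).re + 2 * ((-Complex.I) * (starRingEnd ℂ) c * g).re
        - 2 * γr * ‖c‖^2 := by
  have h2 : Complex.I * d = g - Complex.I*(γr:ℂ)*c - (1/2:ℂ)*e - (‖c‖:ℂ)^2*c := by
    linear_combination h
  have hd : d = -Complex.I * (g - Complex.I * (γr:ℂ) * c - (1/2:ℂ)*e - (‖c‖:ℂ)^2*c) := by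
    calc d = -Complex.I * (Complex.I * d) := by
            rw [← mul_assoc, neg_mul, Complex.I_mul_I, neg_neg, one_mul]
      _ = _ := by rw [h2]
  rw [hd, show ((‖c‖:ℂ))^2 = ((‖c‖^2:ℝ):ℂ) by push_cast; ring]
  simp only [Complex.mul_re, Complex.mul_im, Complex.sub_re, Complex.sub_im, Complex.neg_re,
    Complex.neg_im, Complex.I_re, Complex.I_im, Complex.conj_re, Complex.conj_im,
    Complex.ofReal_re, Complex.ofReal_im]
  norm_num [Complex.sq_norm, Complex.normSq_apply]
  ring

lemma young_ineq (γ b X Y : ℝ) (hγ : 0 < γ) : 2*b*X*Y ≤ γ/2*X^2 + 2*b^2/γ*Y^2 := by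
  have key : γ/2*X^2 + 2*b^2/γ*Y^2 - 2*b*X*Y = (γ*X - 2*b*Y)^2/(2*γ) := by
    field_simp; ring
  nlinarith [div_nonneg (sq_nonneg (γ*X - 2*b*Y)) (by linarith : (0:ℝ) ≤ 2*γ)]

lemma re_abs_bound (a b : ℂ) (c : ℂ) (hc : ‖c‖ = 1) : |(c * (starRingEnd ℂ) a * b).re| ≤ ‖a‖ * ‖b‖ := by
  calc |(c * (starRingEnd ℂ) a * b).re| ≤ ‖c * (starRingEnd ℂ) a * b‖ := Complex.abs_re_le_norm _
    _ = ‖a‖ * ‖b‖ := by rw [norm_mul, norm_mul, hc, one_mul, RCLike.norm_conj]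

set_option maxHeartbeats 2000000 in
/-- Uniform (in `t` and `L`) weighted `L²` estimate (Lemma 2.1):
for a classical solution of the damped driven NLS on `(-L,L) × (0,∞)` with
Dirichlet boundary conditions, under the uniform bounds `∫|uₓ|² ≤ R` and
`∫ρ²|f|² ≤ S`, the weighted mass satisfies
`∫ρ²|u(t)|² ≤ (∫ρ²|u(0)|²) e^{-γt} + M₀(1-e^{-γt})` with
`M₀ = (2/γ²)(Rβ₂² + S)`; in particular `∫ρ²|u(t)|² ≤ ∫ρ²|u(0)|² + M₀`. -/
theorem weighted_mass_uniform_bound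
    (L γ β₂ : ℝ) (hL : 0 < L) (hγ : 0 < γ) (hβ₂ : 0 < β₂)
    (ρ ρ' : ℝ → ℝ) (hρpos : ∀ x, 0 < ρ x)
    (hρ : ∀ x, HasDerivAt ρ (ρ' x) x) (hρ'c : Continuous ρ')
    (hρ'b : ∀ x, |ρ' x| ≤ β₂)
    (f : ℝ → ℝ → ℂ)
    (hf : ContinuousOn (fun p : ℝ × ℝ => f p.1 p.2) (Set.univ ×ˢ Set.Ici 0))
    (u ut ux uxx : ℝ → ℝ → ℂ)
    (hu_cont : ContinuousOn (fun p : ℝ × ℝ => u p.1 p.2) (Set.Icc (-L) L ×ˢ Set.Ici 0))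
    (hut_cont : ContinuousOn (fun p : ℝ × ℝ => ut p.1 p.2) (Set.Icc (-L) L ×ˢ Set.Ici 0))
    (hux_cont : ContinuousOn (fun p : ℝ × ℝ => ux p.1 p.2) (Set.Icc (-L) L ×ˢ Set.Ici 0))
    (huxx_cont : ContinuousOn (fun p : ℝ × ℝ => uxx p.1 p.2) (Set.Icc (-L) L ×ˢ Set.Ici 0))
    (hut : ∀ x ∈ Set.Icc (-L) L, ∀ t > (0:ℝ), HasDerivAt (fun s => u x s) (ut x t) t)
    (hux : ∀ x ∈ Set.Icc (-L) L, ∀ t ≥ (0:ℝ), HasDerivAt (fun y => u y t) (ux x t) x)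
    (huxx : ∀ x ∈ Set.Icc (-L) L, ∀ t ≥ (0:ℝ), HasDerivAt (fun y => ux y t) (uxx x t) x)
    (hPDE : ∀ x ∈ Set.Ioo (-L) L, ∀ t > (0:ℝ),
      Complex.I * ut x t + (1/2 : ℂ) * uxx x t + (‖u x t‖ : ℂ)^2 * u x t
        = f x t - Complex.I * (γ : ℂ) * u x t)
    (hBC : ∀ t ≥ (0:ℝ), u (-L) t = 0 ∧ u L t = 0)
    (R S : ℝ)
    (hR : ∀ t ≥ (0:ℝ), (∫ x in (-L)..L, ‖ux x t‖^2) ≤ R)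
    (hS : ∀ t ≥ (0:ℝ), (∫ x in (-L)..L, (ρ x)^2 * ‖f x t‖^2) ≤ S)
    (M₀ : ℝ) (hM₀ : M₀ = (2/γ^2) * (R * β₂^2 + S)) :
    ∀ t ≥ (0:ℝ),
      (∫ x in (-L)..L, (ρ x)^2 * ‖u x t‖^2)
          ≤ (∫ x in (-L)..L, (ρ x)^2 * ‖u x 0‖^2) * Real.exp (-γ * t)
            + M₀ * (1 - Real.exp (-γ * t)) ∧
      (∫ x in (-L)..L, (ρ x)^2 * ‖u x t‖^2)
          ≤ (∫ x in (-L)..L, (ρ x)^2 * ‖u x 0‖^2) + M₀ := by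
  have hLL : -L ≤ L := by linarith
  have huIcc : Set.uIcc (-L) L = Set.Icc (-L) L := Set.uIcc_of_le hLL
  have hρc : Continuous ρ := continuous_iff_continuousAt.mpr fun x => (hρ x).continuousAt
  -- clamps
  set P : ℝ → ℝ := fun x => max (-L) (min x L) with hPdef
  set Q : ℝ → ℝ := fun s => max s 0 with hQdef
  have hPc : Continuous P := by fun_prop
  have hQc : Continuous Q := by fun_prop
  have hPmem : ∀ x, P x ∈ Set.Icc (-L) L := fun x =>
    ⟨le_max_left _ _, max_le hLL (min_le_right _ _)⟩
  have hPeq : ∀ x ∈ Set.Icc (-L) L, P x = x := by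
    intro x hx
    simp only [hPdef, min_eq_left hx.2, max_eq_right hx.1]
  have hQmem : ∀ s : ℝ, Q s ∈ Set.Ici (0:ℝ) := fun s => show (0:ℝ) ≤ max s 0 from le_max_right _ _
  have hQeq : ∀ s : ℝ, 0 ≤ s → Q s = s := fun s hs => max_eq_left hs
  -- clamped functions
  set v : ℝ → ℝ → ℂ := fun x s => u (P x) (Q s) with hvdef
  set w : ℝ → ℝ → ℂ := fun x s => ut (P x) (Q s) with hwdef
  have hPQc : Continuous fun p : ℝ × ℝ => (P p.1, Q p.2) :=
    (hPc.comp continuous_fst).prodMk (hQc.comp continuous_snd)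
  have hvc : Continuous fun p : ℝ × ℝ => v p.1 p.2 :=
    hu_cont.comp_continuous hPQc fun p => ⟨hPmem _, hQmem _⟩
  have hwc : Continuous fun p : ℝ × ℝ => w p.1 p.2 :=
    hut_cont.comp_continuous hPQc fun p => ⟨hPmem _, hQmem _⟩
  -- energy and its derivative candidate
  set E : ℝ → ℝ := fun s => ∫ x in (-L)..L, ρ x ^ 2 * ‖v x s‖ ^ 2 with hEdef
  set D : ℝ → ℝ :=
    fun s => ∫ x in (-L)..L, ρ x ^ 2 * (2 * ((starRingEnd ℂ) (v x s) * w x s).re) with hDdef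
  have hEeq : ∀ s : ℝ, 0 ≤ s → E s = ∫ x in (-L)..L, ρ x ^ 2 * ‖u x s‖ ^ 2 := by
    intro s hs
    apply intervalIntegral.integral_congr
    intro x hx
    rw [huIcc] at hx
    simp only [hvdef, hPeq x hx, hQeq s hs]
  have hEcont : Continuous E := by
    have hcu : Continuous (Function.uncurry fun s x => ρ x ^ 2 * ‖v x s‖ ^ 2) := by
      apply Continuous.mul
      · exact (hρc.comp continuous_snd).pow 2
      · exact ((hvc.comp (continuous_snd.prodMk continuous_fst)).norm).pow 2
    exact intervalIntegral.continuous_parametric_intervalIntegral_of_continuous' hcu (-L) L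
  -- slices
  have slice : ∀ g : ℝ → ℝ → ℂ,
      ContinuousOn (fun p : ℝ × ℝ => g p.1 p.2) (Set.Icc (-L) L ×ˢ Set.Ici 0) →
      ∀ s : ℝ, 0 ≤ s → ContinuousOn (fun x => g x s) (Set.Icc (-L) L) := by
    intro g hg s hs
    exact hg.comp ((continuous_id.prodMk continuous_const).continuousOn) fun x hx => ⟨hx, hs⟩
  have hfslice : ∀ s : ℝ, 0 ≤ s → ContinuousOn (fun x => f x s) (Set.Icc (-L) L) := by
    intro s hs
    exact hf.comp ((continuous_id.prodMk continuous_const).continuousOn) fun x hx => ⟨trivial, hs⟩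
  -- Step A : derivative of E
  have hEderiv : ∀ s : ℝ, 0 < s → HasDerivAt E (D s) s := by
    intro s hs
    have hball : Metric.ball s (s/2) ⊆ Set.Ioi (0:ℝ) := by
      intro y hy
      rw [Metric.mem_ball, Real.dist_eq] at hy
      have := abs_lt.mp hy
      simp only [Set.mem_Ioi]
      linarith [this.1]
    have hF'c : Continuous fun p : ℝ × ℝ =>
        ρ p.2 ^ 2 * (2 * ((starRingEnd ℂ) (v p.2 p.1) * w p.2 p.1).re) := by
      apply Continuous.mul
      · exact (hρc.comp continuous_snd).pow 2
      · apply Continuous.mul continuous_const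
        apply Complex.continuous_re.comp
        apply Continuous.mul
        · exact Complex.continuous_conj.comp (hvc.comp (continuous_snd.prodMk continuous_fst))
        · exact hwc.comp (continuous_snd.prodMk continuous_fst)
    obtain ⟨C, hC⟩ := (isCompact_Icc.prod isCompact_Icc :
        IsCompact (Set.Icc (s - s/2) (s + s/2) ×ˢ Set.Icc (-L) L)).exists_bound_of_continuousOn
      hF'c.continuousOn
    have key := intervalIntegral.hasDerivAt_integral_of_dominated_loc_of_deriv_le
      (F := fun τ x => ρ x ^ 2 * ‖v x τ‖ ^ 2)
      (F' := fun τ x => ρ x ^ 2 * (2 * ((starRingEnd ℂ) (v x τ) * w x τ).re))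
      (x₀ := s) (a := -L) (b := L) (bound := fun _ => C) (s := Metric.ball s (s/2)) (μ := volume)
      (Metric.ball_mem_nhds s (by linarith : (0:ℝ) < s/2))
      (Filter.Eventually.of_forall fun τ => by
        apply Continuous.aestronglyMeasurable
        exact ((hρc.pow 2).mul (((hvc.comp (continuous_id.prodMk continuous_const)).norm).pow 2)))
      (((hρc.pow 2).mul
        (((hvc.comp (continuous_id.prodMk continuous_const)).norm).pow 2)).intervalIntegrable _ _)
      (by
        apply Continuous.aestronglyMeasurable
        exact hF'c.comp (continuous_const.prodMk continuous_id))
      (Filter.Eventually.of_forall fun x hx => by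
        intro τ hτ
        have hxI : x ∈ Set.Icc (-L) L := by
          rw [Set.uIoc_of_le hLL] at hx
          exact ⟨hx.1.le, hx.2⟩
        have hτI : τ ∈ Set.Icc (s - s/2) (s + s/2) := by
          rw [Metric.mem_ball, Real.dist_eq] at hτ
          have := abs_lt.mp hτ
          constructor <;> linarith
        have := hC (τ, x) ⟨hτI, hxI⟩
        simpa using this)
      intervalIntegrable_const
      (Filter.Eventually.of_forall fun x hx => by
        intro τ hτ
        have hτ0 : 0 < τ := hball hτ
        have h1 : HasDerivAt (fun σ => u (P x) σ) (ut (P x) τ) τ := hut (P x) (hPmem x) τ hτ0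
        have h2 : HasDerivAt (fun σ => v x σ) (ut (P x) τ) τ := by
          apply h1.congr_of_eventuallyEq
          filter_upwards [Ioi_mem_nhds hτ0] with σ hσ
          simp only [hvdef, hQeq σ (le_of_lt hσ)]
        have h3 := (hasDerivAt_normsq h2).const_mul (ρ x ^ 2)
        have hwτ : w x τ = ut (P x) τ := by simp only [hwdef, hQeq τ hτ0.le]
        rw [← hwτ] at h3
        exact h3)
    exact key.2
  -- Step B : differential inequality
  have hDle : ∀ s : ℝ, 0 < s → D s ≤ -γ * E s + γ * M₀ := by
    intro s hs
    have hs0 : (0:ℝ) ≤ s := hs.le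
    have cu := slice u hu_cont s hs0
    have cux := slice ux hux_cont s hs0
    have cuxx := slice uxx huxx_cont s hs0
    have cf := hfslice s hs0
    have crea : ContinuousOn (fun x => (Complex.I * (starRingEnd ℂ) (u x s) * ux x s).re)
        (Set.Icc (-L) L) :=
      Complex.continuous_re.comp_continuousOn
        ((continuousOn_const.mul (Complex.continuous_conj.comp_continuousOn cu)).mul cux)
    have creb : ContinuousOn (fun x => (Complex.I * (starRingEnd ℂ) (u x s) * uxx x s).re)
        (Set.Icc (-L) L) :=
      Complex.continuous_re.comp_continuousOn
        ((continuousOn_const.mul (Complex.continuous_conj.comp_continuousOn cu)).mul cuxx)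
    have crec : ContinuousOn (fun x => ((-Complex.I) * (starRingEnd ℂ) (u x s) * f x s).re)
        (Set.Icc (-L) L) :=
      Complex.continuous_re.comp_continuousOn
        ((continuousOn_const.mul (Complex.continuous_conj.comp_continuousOn cu)).mul cf)
    have int1 : IntervalIntegrable
        (fun x => 2*ρ x*ρ' x*(Complex.I * (starRingEnd ℂ) (u x s) * ux x s).re)
        volume (-L) L := by
      apply ContinuousOn.intervalIntegrable
      rw [huIcc]
      exact ((continuousOn_const.mul hρc.continuousOn).mul hρ'c.continuousOn).mul crea
    have int2 : IntervalIntegrable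
        (fun x => ρ x^2 * (Complex.I * (starRingEnd ℂ) (u x s) * uxx x s).re)
        volume (-L) L := by
      apply ContinuousOn.intervalIntegrable
      rw [huIcc]
      exact ((hρc.continuousOn).pow 2).mul creb
    have int3 : IntervalIntegrable
        (fun x => ρ x^2 * (2*((-Complex.I) * (starRingEnd ℂ) (u x s) * f x s).re
          - 2*γ*‖u x s‖^2)) volume (-L) L := by
      apply ContinuousOn.intervalIntegrable
      rw [huIcc]
      exact ((hρc.continuousOn).pow 2).mul
        ((continuousOn_const.mul crec).sub (continuousOn_const.mul ((cu.norm).pow 2)))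
    -- D s in terms of u, ut
    have hD1 : D s = ∫ x in (-L)..L, ρ x ^ 2 * (2 * ((starRingEnd ℂ) (u x s) * ut x s).re) := by
      apply intervalIntegral.integral_congr
      intro x hx
      rw [huIcc] at hx
      simp only [hvdef, hwdef, hPeq x hx, hQeq s hs0]
    -- PDE substitution (a.e. on the interval)
    have hD2 : D s = ∫ x in (-L)..L,
        ρ x ^ 2 * ((Complex.I * (starRingEnd ℂ) (u x s) * uxx x s).re
          + 2*((-Complex.I) * (starRingEnd ℂ) (u x s) * f x s).re - 2*γ*‖u x s‖^2) := by
      rw [hD1]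
      apply intervalIntegral.integral_congr_ae
      filter_upwards [(Set.countable_singleton L).ae_notMem volume] with x hxL hx
      rw [Set.uIoc_of_le hLL] at hx
      have hxIoo : x ∈ Set.Ioo (-L) L := ⟨hx.1, lt_of_le_of_ne hx.2 (by simpa using hxL)⟩
      rw [pde_pointwise γ (u x s) (ut x s) (uxx x s) (f x s) (hPDE x hxIoo s hs)]
    -- integration by parts
    have hibp : (∫ x in (-L)..L,
        (2*ρ x*ρ' x*(Complex.I * (starRingEnd ℂ) (u x s) * ux x s).re
          + ρ x^2 * (Complex.I * (starRingEnd ℂ) (u x s) * uxx x s).re)) = 0 := by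
      have hG : ∀ x ∈ Set.uIcc (-L) L,
          HasDerivAt (fun y => ρ y^2 * (Complex.I * (starRingEnd ℂ) (u y s) * ux y s).re)
            (2*ρ x*ρ' x*(Complex.I * (starRingEnd ℂ) (u x s) * ux x s).re
              + ρ x^2 * (Complex.I * (starRingEnd ℂ) (u x s) * uxx x s).re) x := by
        intro x hx
        rw [huIcc] at hx
        have hu' := hux x hx s hs0
        have huxx' := huxx x hx s hs0
        have hH : HasDerivAt (fun y => Complex.I * (starRingEnd ℂ) (u y s) * ux y s)
            (Complex.I * (starRingEnd ℂ) (ux x s) * ux x s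
              + Complex.I * (starRingEnd ℂ) (u x s) * uxx x s) x := by
          have hmul := ((conj_deriv hu').const_mul Complex.I).mul huxx'
          exact hmul
        have hHre : HasDerivAt (fun y => (Complex.I * (starRingEnd ℂ) (u y s) * ux y s).re)
            (Complex.I * (starRingEnd ℂ) (ux x s) * ux x s
              + Complex.I * (starRingEnd ℂ) (u x s) * uxx x s).re x :=
          Complex.reCLM.hasFDerivAt.comp_hasDerivAt x hH
        have hprod := ((hρ x).pow 2).mul hHre
        refine HasDerivAt.congr_deriv hprod ?_
        rw [Complex.add_re, re_I_mul_conj_self, Pi.pow_apply]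
        push_cast
        ring
      have hcont : ContinuousOn (fun x =>
          2*ρ x*ρ' x*(Complex.I * (starRingEnd ℂ) (u x s) * ux x s).re
            + ρ x^2 * (Complex.I * (starRingEnd ℂ) (u x s) * uxx x s).re)
          (Set.uIcc (-L) L) := by
        rw [huIcc]
        exact (((continuousOn_const.mul hρc.continuousOn).mul hρ'c.continuousOn).mul crea).add
          (((hρc.continuousOn).pow 2).mul creb)
      rw [intervalIntegral.integral_eq_sub_of_hasDerivAt hG hcont.intervalIntegrable]
      obtain ⟨hbc1, hbc2⟩ := hBC s hs0
      simp [hbc1, hbc2]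
    have h_I2 : (∫ x in (-L)..L, ρ x^2 * (Complex.I * (starRingEnd ℂ) (u x s) * uxx x s).re)
        = - ∫ x in (-L)..L, 2*ρ x*ρ' x*(Complex.I * (starRingEnd ℂ) (u x s) * ux x s).re := by
      rw [intervalIntegral.integral_add int1 int2] at hibp
      linarith
    -- regroup
    have hD3 : D s = (- ∫ x in (-L)..L,
          2*ρ x*ρ' x*(Complex.I * (starRingEnd ℂ) (u x s) * ux x s).re)
        + ∫ x in (-L)..L, ρ x^2 * (2*((-Complex.I) * (starRingEnd ℂ) (u x s) * f x s).re
            - 2*γ*‖u x s‖^2) := by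
      rw [hD2, ← h_I2, ← intervalIntegral.integral_add int2 int3]
      apply intervalIntegral.integral_congr
      intro x hx
      ring
    have hD4 : D s = ∫ x in (-L)..L,
        (-(2*ρ x*ρ' x*(Complex.I * (starRingEnd ℂ) (u x s) * ux x s).re)
          + ρ x^2 * (2*((-Complex.I) * (starRingEnd ℂ) (u x s) * f x s).re - 2*γ*‖u x s‖^2)) := by
      have int1' : IntervalIntegrable
          (fun x => -(2*ρ x*ρ' x*(Complex.I * (starRingEnd ℂ) (u x s) * ux x s).re))
          volume (-L) L := int1.neg
      rw [hD3, ← intervalIntegral.integral_neg, ← intervalIntegral.integral_add int1' int3]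
    -- pointwise bound
    have hpt : ∀ x ∈ Set.Icc (-L) L,
        -(2*ρ x*ρ' x*(Complex.I * (starRingEnd ℂ) (u x s) * ux x s).re)
          + ρ x^2 * (2*((-Complex.I) * (starRingEnd ℂ) (u x s) * f x s).re - 2*γ*‖u x s‖^2)
        ≤ -γ*(ρ x^2*‖u x s‖^2) + 2*β₂^2/γ*‖ux x s‖^2 + 2/γ*(ρ x^2*‖f x s‖^2) := by
      intro x hx
      have hI : ‖Complex.I‖ = 1 := by
        rw [Complex.norm_I]
      have hnI : ‖-Complex.I‖ = 1 := by
        rw [norm_neg, hI]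
      have hr1 : |(Complex.I * (starRingEnd ℂ) (u x s) * ux x s).re| ≤ ‖u x s‖*‖ux x s‖ :=
        re_abs_bound (u x s) (ux x s) Complex.I hI
      have hr2 : |((-Complex.I) * (starRingEnd ℂ) (u x s) * f x s).re| ≤ ‖u x s‖*‖f x s‖ :=
        re_abs_bound (u x s) (f x s) (-Complex.I) hnI
      have hmix : |ρ' x * (Complex.I * (starRingEnd ℂ) (u x s) * ux x s).re|
          ≤ β₂ * (‖u x s‖*‖ux x s‖) := by
        rw [abs_mul]
        exact mul_le_mul (hρ'b x) hr1 (abs_nonneg _) (le_trans (abs_nonneg _) (hρ'b x))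
      have hb1 : -(2*ρ x*ρ' x*(Complex.I * (starRingEnd ℂ) (u x s) * ux x s).re)
          ≤ 2*β₂*(ρ x*‖u x s‖)*‖ux x s‖ := by
        have hcomb : 0 ≤ β₂ * (‖u x s‖*‖ux x s‖)
            + ρ' x * (Complex.I * (starRingEnd ℂ) (u x s) * ux x s).re := by
          have := neg_abs_le (ρ' x * (Complex.I * (starRingEnd ℂ) (u x s) * ux x s).re)
          linarith
        nlinarith [(hρpos x).le, hcomb]
      have hb2 : 2*ρ x^2*((-Complex.I) * (starRingEnd ℂ) (u x s) * f x s).re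
          ≤ 2*(ρ x*‖u x s‖)*(ρ x*‖f x s‖) := by
        have h2' : ((-Complex.I) * (starRingEnd ℂ) (u x s) * f x s).re ≤ ‖u x s‖*‖f x s‖ :=
          (abs_le.mp hr2).2
        nlinarith [sq_nonneg (ρ x)]
      have hy1 : 2*β₂*(ρ x*‖u x s‖)*‖ux x s‖
          ≤ γ/2*(ρ x*‖u x s‖)^2 + 2*β₂^2/γ*‖ux x s‖^2 := young_ineq γ β₂ _ _ hγ
      have hy2 : 2*(ρ x*‖u x s‖)*(ρ x*‖f x s‖)
          ≤ γ/2*(ρ x*‖u x s‖)^2 + 2/γ*(ρ x*‖f x s‖)^2 := by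
        have := young_ineq γ 1 (ρ x*‖u x s‖) (ρ x*‖f x s‖) hγ
        simpa using this
      nlinarith [hb1, hb2, hy1, hy2]
    -- integrable RHS pieces
    have intR1 : IntervalIntegrable (fun x => -γ*(ρ x^2*‖u x s‖^2)) volume (-L) L := by
      apply ContinuousOn.intervalIntegrable
      rw [huIcc]
      exact continuousOn_const.mul (((hρc.continuousOn).pow 2).mul ((cu.norm).pow 2))
    have intR2 : IntervalIntegrable (fun x => 2*β₂^2/γ*‖ux x s‖^2) volume (-L) L := by
      apply ContinuousOn.intervalIntegrable
      rw [huIcc]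
      exact continuousOn_const.mul ((cux.norm).pow 2)
    have intR3 : IntervalIntegrable (fun x => 2/γ*(ρ x^2*‖f x s‖^2)) volume (-L) L := by
      apply ContinuousOn.intervalIntegrable
      rw [huIcc]
      exact continuousOn_const.mul (((hρc.continuousOn).pow 2).mul ((cf.norm).pow 2))
    have hmono : D s ≤ ∫ x in (-L)..L,
        (-γ*(ρ x^2*‖u x s‖^2) + 2*β₂^2/γ*‖ux x s‖^2 + 2/γ*(ρ x^2*‖f x s‖^2)) := by
      rw [hD4]
      apply intervalIntegral.integral_mono_on hLL (int1.neg.add int3)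
        ((intR1.add intR2).add intR3)
      exact hpt
    have hsplit : (∫ x in (-L)..L,
        (-γ*(ρ x^2*‖u x s‖^2) + 2*β₂^2/γ*‖ux x s‖^2 + 2/γ*(ρ x^2*‖f x s‖^2)))
        = -γ * (∫ x in (-L)..L, ρ x^2*‖u x s‖^2)
          + 2*β₂^2/γ * (∫ x in (-L)..L, ‖ux x s‖^2)
          + 2/γ * (∫ x in (-L)..L, ρ x^2*‖f x s‖^2) := by
      rw [intervalIntegral.integral_add (intR1.add intR2) intR3,
        intervalIntegral.integral_add intR1 intR2,
        intervalIntegral.integral_const_mul, intervalIntegral.integral_const_mul,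
        intervalIntegral.integral_const_mul]
    have hcoef : (0:ℝ) ≤ 2*β₂^2/γ := by positivity
    have hcoef2 : (0:ℝ) ≤ 2/γ := by positivity
    have hfin : 2*β₂^2/γ*R + 2/γ*S = γ*M₀ := by
      rw [hM₀]
      field_simp
    have hEs := hEeq s hs0
    calc D s ≤ _ := hmono
      _ = -γ * (∫ x in (-L)..L, ρ x^2*‖u x s‖^2)
          + 2*β₂^2/γ * (∫ x in (-L)..L, ‖ux x s‖^2)
          + 2/γ * (∫ x in (-L)..L, ρ x^2*‖f x s‖^2) := hsplit
      _ ≤ -γ * (∫ x in (-L)..L, ρ x^2*‖u x s‖^2) + 2*β₂^2/γ * R + 2/γ * S := by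
          have h1 := mul_le_mul_of_nonneg_left (hR s hs0) hcoef
          have h2 := mul_le_mul_of_nonneg_left (hS s hs0) hcoef2
          linarith
      _ = -γ * E s + γ * M₀ := by rw [hEs]; linarith [hfin]
  have hE0 : 0 ≤ E 0 := by
    rw [hEeq 0 le_rfl]
    apply intervalIntegral.integral_nonneg hLL
    intro x hx
    positivity
  have hR0 : 0 ≤ R :=
    le_trans (intervalIntegral.integral_nonneg hLL (fun x hx => by positivity)) (hR 0 le_rfl)
  have hS0 : 0 ≤ S :=
    le_trans (intervalIntegral.integral_nonneg hLL (fun x hx => by positivity)) (hS 0 le_rfl)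
  have hM0 : 0 ≤ M₀ := by
    rw [hM₀]
    exact mul_nonneg (by positivity) (add_nonneg (mul_nonneg hR0 (sq_nonneg _)) hS0)
  intro T hT
  have main : E T ≤ E 0 * Real.exp (-γ*T) + M₀*(1-Real.exp (-γ*T)) := by
    rcases eq_or_lt_of_le hT with h0 | hpos
    · rw [← h0]
      simp
    · have hφd : ∀ s : ℝ, 0 < s →
          HasDerivAt (fun y => (E y - M₀) * Real.exp (γ*y))
            (D s * Real.exp (γ*s) + (E s - M₀)*(Real.exp (γ*s)*γ)) s := by
        intro s hs
        have h1 : HasDerivAt (fun y : ℝ => γ*y) γ s := by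
          simpa using (hasDerivAt_id s).const_mul γ
        exact ((hEderiv s hs).sub_const M₀).mul h1.exp
      have hanti : AntitoneOn (fun y => (E y - M₀) * Real.exp (γ*y)) (Set.Icc 0 T) := by
        apply antitoneOn_of_deriv_nonpos (convex_Icc 0 T)
        · exact ((hEcont.sub continuous_const).mul
            (Real.continuous_exp.comp (continuous_const.mul continuous_id))).continuousOn
        · intro s hs
          rw [interior_Icc] at hs
          exact (hφd s hs.1).differentiableAt.differentiableWithinAt
        · intro s hs
          rw [interior_Icc] at hs
          rw [(hφd s hs.1).deriv]
          have hD := hDle s hs.1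
          nlinarith [Real.exp_pos (γ*s)]
      have hstep := hanti (Set.left_mem_Icc.mpr hT) (Set.right_mem_Icc.mpr hT) hT
      simp only [mul_zero, Real.exp_zero, mul_one] at hstep
      have hexp : Real.exp (γ*T) * Real.exp (-γ*T) = 1 := by
        rw [← Real.exp_add]
        ring_nf
        exact Real.exp_zero
      have h3 : E T - M₀ ≤ (E 0 - M₀) * Real.exp (-γ*T) := by
        have h4 := mul_le_mul_of_nonneg_right hstep (Real.exp_pos (-γ*T)).le
        calc E T - M₀ = (E T - M₀) * (Real.exp (γ*T) * Real.exp (-γ*T)) := by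
              rw [hexp, mul_one]
          _ = (E T - M₀) * Real.exp (γ*T) * Real.exp (-γ*T) := by ring
          _ ≤ (E 0 - M₀) * Real.exp (-γ*T) := h4
      nlinarith [h3]
  have he1 : Real.exp (-γ*T) ≤ 1 := by
    calc Real.exp (-γ*T) ≤ Real.exp 0 := Real.exp_le_exp.mpr (by nlinarith)
      _ = 1 := Real.exp_zero
  constructor
  · rw [← hEeq T hT, ← hEeq 0 le_rfl]
    exact main
  · rw [← hEeq T hT, ← hEeq 0 le_rfl]
    nlinarith [main, hE0, hM0, he1, (Real.exp_pos (-γ*T)).le]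
end

section
/- Let L > 0, γ > 0, β₂ > 0, let ρ : ℝ → ℝ be continuously differentiable with |ρ'(x)| ≤ β₂, let f : ℝ × [0,∞) → ℂ be continuous with jointly continuous time derivative ∂_t f, and let u be a classical solution of i∂_t u + (1/2)∂_x²u + |u|²u = f − iγu on (−L,L)×(0,∞) (with u, ∂_t u, ∂_x u, ∂_x²u, ∂_t∂_x u jointly continuous) satisfying u(±L,t) = ∂_x u(±L,t) = 0 for all t ≥ 0. Assume the uniform bounds ∫_{−L}^{L}|u|²dx ≤ R, ∫_{−L}^{L}|∂_t u|²dx ≤ R', sup_x |u(x,t)|² ≤ R'', and ∫_{−L}^{L}ρ²|u|²dx ≤ R₀ for all t ≥ 0. Define J(t) = (1/4)∫_{−L}^{L}ρ²|∂_x u|²dx − (1/4)∫_{−L}^{L}ρ²|u|⁴dx + Re∫_{−L}^{L}ρ² f conj(u) dx. Then J is differentiable and satisfies, for all t > 0, J'(t) + γJ(t) + (γ/8)∫_{−L}^{L}ρ²|∂_x u(x,t)|²dx ≤ 4β₂²R'/γ + 4β₂²γR + (3γR''R₀)/4 + R₀/2 + (1/2)∫_{−L}^{L}ρ(x)²|∂_t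 f(x,t)|²dx. -/
open MeasureTheory Set Topology Filter

section Aux

lemma param_hasDerivAt {E : Type*} [NormedAddCommGroup E] [NormedSpace ℝ E] [CompleteSpace E]
    {a b t ε : ℝ} (hab : a ≤ b) (hε : 0 < ε)
    (F F' : ℝ → ℝ → E)
    (hF : ContinuousOn (fun p : ℝ × ℝ => F p.1 p.2) (Set.Icc a b ×ˢ Set.Icc (t-ε) (t+ε)))
    (hF' : ContinuousOn (fun p : ℝ × ℝ => F' p.1 p.2) (Set.Icc a b ×ˢ Set.Icc (t-ε) (t+ε)))
    (hd : ∀ x ∈ Set.Icc a b, ∀ s ∈ Metric.ball t ε, HasDerivAt (fun s => F x s) (F' x s) s) :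
    HasDerivAt (fun s => ∫ x in a..b, F x s) (∫ x in a..b, F' x t) t := by
  have hball : Metric.ball t ε ⊆ Set.Icc (t-ε) (t+ε) := by
    rw [Real.ball_eq_Ioo]; exact Set.Ioo_subset_Icc_self
  have htmem : t ∈ Set.Icc (t-ε) (t+ε) := by constructor <;> linarith
  have hIoc : Set.uIoc a b = Set.Ioc a b := Set.uIoc_of_le hab
  have hsliceF : ∀ s ∈ Set.Icc (t-ε) (t+ε), ContinuousOn (fun x => F x s) (Set.Icc a b) := by
    intro s hs
    exact hF.comp (f := fun x : ℝ => ((x, s) : ℝ × ℝ)) (by fun_prop) (fun x hx => ⟨hx, hs⟩)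
  have hsliceF' : ∀ s ∈ Set.Icc (t-ε) (t+ε), ContinuousOn (fun x => F' x s) (Set.Icc a b) := by
    intro s hs
    exact hF'.comp (f := fun x : ℝ => ((x, s) : ℝ × ℝ)) (by fun_prop) (fun x hx => ⟨hx, hs⟩)
  obtain ⟨M, hM⟩ := (IsCompact.prod isCompact_Icc isCompact_Icc).exists_bound_of_continuousOn hF'
  have key := intervalIntegral.hasDerivAt_integral_of_dominated_loc_of_deriv_le
    (F := fun s x => F x s) (F' := fun s x => F' x s) (x₀ := t) (a := a) (b := b)
    (bound := fun _ => M) (μ := volume) (Metric.ball_mem_nhds t hε)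
    (by
      filter_upwards [Metric.ball_mem_nhds t hε] with s hs
      exact ((hsliceF s (hball hs)).mono (by rw [hIoc]; exact Set.Ioc_subset_Icc_self)
        ).aestronglyMeasurable (by rw [hIoc]; exact measurableSet_Ioc))
    (by
      apply ContinuousOn.intervalIntegrable
      rw [Set.uIcc_of_le hab]; exact hsliceF t htmem)
    (((hsliceF' t htmem).mono (by rw [hIoc]; exact Set.Ioc_subset_Icc_self)
        ).aestronglyMeasurable (by rw [hIoc]; exact measurableSet_Ioc))
    (Filter.Eventually.of_forall (by
      intro x hx s hs
      exact hM (x, s) ⟨(by rw [hIoc] at hx; exact Set.Ioc_subset_Icc_self hx), hball hs⟩))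
    intervalIntegrable_const
    (Filter.Eventually.of_forall (by
      intro x hx s hs
      exact hd x (by rw [hIoc] at hx; exact Set.Ioc_subset_Icc_self hx) s hs))
  exact key.2

lemma schwarz_mixed (L : ℝ) (u ut ux utx : ℝ → ℝ → ℂ)
    (hux_cont : ContinuousOn (fun p : ℝ × ℝ => ux p.1 p.2) (Set.Icc (-L) L ×ˢ Set.Ici 0))
    (hutx_cont : ContinuousOn (fun p : ℝ × ℝ => utx p.1 p.2) (Set.Icc (-L) L ×ˢ Set.Ici 0))
    (hut : ∀ x ∈ Set.Icc (-L) L, ∀ t > (0:ℝ), HasDerivAt (fun s => u x s) (ut x t) t)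
    (hux : ∀ x ∈ Set.Icc (-L) L, ∀ t ≥ (0:ℝ), HasDerivAt (fun y => u y t) (ux x t) x)
    (hutx : ∀ x ∈ Set.Icc (-L) L, ∀ t > (0:ℝ), HasDerivAt (fun s => ux x s) (utx x t) t)
    {t : ℝ} (ht : 0 < t) {x : ℝ} (hx : x ∈ Set.Ioo (-L) L) :
    HasDerivAt (fun y => ut y t) (utx x t) x := by
  have hLL : -L ≤ L := le_of_lt (lt_trans hx.1 hx.2)
  have hL0 : (-L : ℝ) ∈ Set.Icc (-L) L := ⟨le_refl _, hLL⟩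
  have hcux : ∀ s ≥ (0:ℝ), ContinuousOn (fun y => ux y s) (Set.Icc (-L) L) := by
    intro s hs
    exact hux_cont.comp (f := fun y : ℝ => ((y, s) : ℝ × ℝ)) (by fun_prop) (fun y hy => ⟨hy, hs⟩)
  have hcutx : ContinuousOn (fun y => utx y t) (Set.Icc (-L) L) := by
    exact hutx_cont.comp (f := fun y : ℝ => ((y, t) : ℝ × ℝ)) (by fun_prop)
      (fun y hy => ⟨hy, le_of_lt ht⟩)
  have key : ∀ y ∈ Set.Icc (-L) L, ut y t = ut (-L) t + ∫ z in (-L)..y, utx z t := by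
    intro y hy
    have hwin : Set.Icc (t - t/2) (t + t/2) ⊆ Set.Ici (0:ℝ) := by
      intro s hs; simp only [Set.mem_Ici]; have := hs.1; linarith
    have hball : Metric.ball t (t/2) ⊆ Set.Ioi (0:ℝ) := by
      rw [Real.ball_eq_Ioo]; intro s hs; simp only [Set.mem_Ioi]; have := hs.1; linarith
    have hsub : Set.Icc (-L) y ⊆ Set.Icc (-L) L := Set.Icc_subset_Icc le_rfl hy.2
    have hder : HasDerivAt (fun s => ∫ z in (-L)..y, ux z s) (∫ z in (-L)..y, utx z t) t := by
      apply param_hasDerivAt hy.1 (by linarith : (0:ℝ) < t/2)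
      · exact hux_cont.mono (Set.prod_mono hsub hwin)
      · exact hutx_cont.mono (Set.prod_mono hsub hwin)
      · intro z hz s hs
        exact hutx z (hsub hz) s (hball hs)
    have heq : ∀ s ≥ (0:ℝ), u y s - u (-L) s = ∫ z in (-L)..y, ux z s := by
      intro s hs
      have hint0 : IntervalIntegrable (fun z => ux z s) volume (-L) y := by
        apply ContinuousOn.intervalIntegrable
        rw [Set.uIcc_of_le hy.1]
        exact (hcux s hs).mono hsub
      rw [intervalIntegral.integral_eq_sub_of_hasDerivAt
        (f := fun z => u z s) (f' := fun z => ux z s)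
        (fun z hz => hux z (hsub (by rwa [Set.uIcc_of_le hy.1] at hz)) s hs) hint0]
    have hder2 : HasDerivAt (fun s => u y s - u (-L) s) (∫ z in (-L)..y, utx z t) t := by
      apply hder.congr_of_eventuallyEq
      filter_upwards [eventually_gt_nhds ht] with s hs
      · exact heq s (le_of_lt hs)
    have hder3 : HasDerivAt (fun s => u y s - u (-L) s) (ut y t - ut (-L) t) t :=
      (hut y hy t ht).sub (hut (-L) hL0 t ht)
    have hu2 := hder2.unique hder3
    linear_combination -hu2
  have hmemIcc : Set.Icc (-L) L ∈ 𝓝 x := Icc_mem_nhds hx.1 hx.2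
  have hev : (fun y => ut y t) =ᶠ[𝓝 x] fun y => ut (-L) t + ∫ z in (-L)..y, utx z t := by
    filter_upwards [hmemIcc] with y hy using key y hy
  rw [hev.hasDerivAt_iff]
  have hint : IntervalIntegrable (fun z => utx z t) volume (-L) x :=
    ContinuousOn.intervalIntegrable (by
      rw [Set.uIcc_of_le (le_of_lt hx.1)]
      exact hcutx.mono (Set.Icc_subset_Icc le_rfl (le_of_lt hx.2)))
  have hmeas := (ContinuousOn.stronglyMeasurableAtFilter (μ := volume) isOpen_Ioo
    (hcutx.mono Set.Ioo_subset_Icc_self)) x hx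
  have hca : ContinuousAt (fun z => utx z t) x := hcutx.continuousAt hmemIcc
  exact HasDerivAt.const_add _ (intervalIntegral.integral_hasDerivAt_right hint hmeas hca)

lemma norm_sq_eq_re_mul_conj (z : ℂ) : ‖z‖^2 = (z * (starRingEnd ℂ) z).re := by
  rw [Complex.mul_conj]
  simp [Complex.sq_norm]

lemma hasDerivAt_cre {w : ℝ → ℂ} {b : ℂ} {s : ℝ} (hw : HasDerivAt w b s) :
    HasDerivAt (fun s => (w s).re) b.re s :=
  (Complex.reCLM.hasFDerivAt.comp_hasDerivAt s hw)

lemma hasDerivAt_norm_sq {v : ℝ → ℂ} {a : ℂ} {s : ℝ} (hv : HasDerivAt v a s) :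
    HasDerivAt (fun s => ‖v s‖^2) (2 * (a * (starRingEnd ℂ) (v s)).re) s := by
  have h1 : HasDerivAt (fun s => (v s * (starRingEnd ℂ) (v s)).re)
      (a * (starRingEnd ℂ) (v s) + v s * (starRingEnd ℂ) a).re s :=
    hasDerivAt_cre (hv.mul hv.star)
  have h2 : (a * (starRingEnd ℂ) (v s) + v s * (starRingEnd ℂ) a).re
      = 2 * (a * (starRingEnd ℂ) (v s)).re := by
    simp [Complex.add_re, Complex.mul_re, Complex.conj_re, Complex.conj_im]; ring
  rw [h2] at h1
  apply h1.congr_of_eventuallyEq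
  apply Filter.Eventually.of_forall
  intro s
  exact norm_sq_eq_re_mul_conj (v s)

lemma alg_pre (z : ℂ) : ‖z‖^2 = z.re^2 + z.im^2 := by
  rw [Complex.sq_norm, Complex.normSq_apply]; ring

lemma alg1 (γ : ℝ) (U Ut Uxx F : ℂ)
    (h : Complex.I * Ut + (1/2 : ℂ) * Uxx + (‖U‖ : ℂ)^2 * U = F - Complex.I * (γ:ℂ) * U) :
    (Ut * (starRingEnd ℂ) Uxx).re
      = 2*(Ut * (starRingEnd ℂ) F).re - 2*γ*(Ut * (starRingEnd ℂ) U).im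
        - 2*‖U‖^2*(Ut * (starRingEnd ℂ) U).re := by
  have hn : ((‖U‖:ℂ))^2 = ((U.re^2 + U.im^2 : ℝ) : ℂ) := by
    rw [← Complex.ofReal_pow, alg_pre U]
  have hUxx : Uxx = 2*F - 2*Complex.I*(γ:ℂ)*U - 2*Complex.I*Ut - 2*((U.re^2+U.im^2:ℝ):ℂ)*U := by
    rw [← hn]; linear_combination 2*h
  subst hUxx
  rw [alg_pre U]
  simp only [map_sub, map_mul, map_add, map_pow, map_ofNat, Complex.conj_I, Complex.conj_ofReal,
    Complex.mul_re, Complex.mul_im, Complex.sub_re, Complex.sub_im, Complex.add_re, Complex.add_im,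
    Complex.I_re, Complex.I_im, Complex.ofReal_re, Complex.ofReal_im, Complex.re_ofNat,
    Complex.im_ofNat, Complex.conj_re, Complex.conj_im, Complex.neg_re, Complex.neg_im]
  ring

lemma alg2 (γ : ℝ) (U Ut Uxx F : ℂ)
    (h : Complex.I * Ut + (1/2 : ℂ) * Uxx + (‖U‖ : ℂ)^2 * U = F - Complex.I * (γ:ℂ) * U) :
    (Ut * (starRingEnd ℂ) U).im
      = -((F * (starRingEnd ℂ) U).re) + (1/2)*((Uxx * (starRingEnd ℂ) U).re)
        + (‖U‖^2)^2 := by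
  have hn : ((‖U‖:ℂ))^2 = ((U.re^2 + U.im^2 : ℝ) : ℂ) := by
    rw [← Complex.ofReal_pow, alg_pre U]
  have hUt : Ut = -Complex.I*F - (γ:ℂ)*U + (Complex.I/2)*Uxx + Complex.I*((U.re^2+U.im^2:ℝ):ℂ)*U := by
    rw [← hn]; linear_combination (-Complex.I)*h + (Ut + (γ:ℂ)*U)*Complex.I_sq
  subst hUt
  rw [alg_pre U]
  simp only [map_sub, map_mul, map_add, map_pow, map_ofNat, Complex.conj_I, Complex.conj_ofReal,
    Complex.mul_re, Complex.mul_im, Complex.sub_re, Complex.sub_im, Complex.add_re, Complex.add_im,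
    Complex.I_re, Complex.I_im, Complex.ofReal_re, Complex.ofReal_im, Complex.re_ofNat,
    Complex.im_ofNat, Complex.conj_re, Complex.conj_im, Complex.neg_re, Complex.neg_im,
    Complex.div_re, Complex.div_im, Complex.normSq_apply]
  ring

end Aux

/-- Differential inequality for the weighted energy functional
`J(t) = (1/4)∫ρ²|uₓ|² - (1/4)∫ρ²|u|⁴ + Re∫ρ² f ū` (Lemma 2.2): for a classical
solution of the damped driven NLS on `(-L,L) × (0,∞)` with `u = uₓ = 0` at
`x = ±L`, and under the uniform bounds `∫|u|² ≤ R`, `∫|uₜ|² ≤ R'`,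
`supₓ|u|² ≤ R''`, `∫ρ²|u|² ≤ R₀`, `J` satisfies
`J'(t) + γJ(t) + (γ/8)∫ρ²|uₓ|² ≤ 4β₂²R'/γ + 4β₂²γR + 3γR''R₀/4 + R₀/2 + (1/2)∫ρ²|fₜ|²`. -/
theorem weighted_energy_functional_inequality
    (L γ β₂ : ℝ) (hL : 0 < L) (hγ : 0 < γ) (hβ₂ : 0 < β₂)
    (ρ ρ' : ℝ → ℝ) (hρpos : ∀ x, 0 < ρ x)
    (hρ : ∀ x, HasDerivAt ρ (ρ' x) x) (hρ'c : Continuous ρ')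
    (hρ'b : ∀ x, |ρ' x| ≤ β₂)
    (f ft : ℝ → ℝ → ℂ)
    (hf : ContinuousOn (fun p : ℝ × ℝ => f p.1 p.2) (Set.univ ×ˢ Set.Ici 0))
    (hft : ∀ x, ∀ t > (0:ℝ), HasDerivAt (fun s => f x s) (ft x t) t)
    (hft_cont : ContinuousOn (fun p : ℝ × ℝ => ft p.1 p.2) (Set.univ ×ˢ Set.Ici 0))
    (u ut ux uxx utx : ℝ → ℝ → ℂ)
    (hu_cont : ContinuousOn (fun p : ℝ × ℝ => u p.1 p.2) (Set.Icc (-L) L ×ˢ Set.Ici 0))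
    (hut_cont : ContinuousOn (fun p : ℝ × ℝ => ut p.1 p.2) (Set.Icc (-L) L ×ˢ Set.Ici 0))
    (hux_cont : ContinuousOn (fun p : ℝ × ℝ => ux p.1 p.2) (Set.Icc (-L) L ×ˢ Set.Ici 0))
    (huxx_cont : ContinuousOn (fun p : ℝ × ℝ => uxx p.1 p.2) (Set.Icc (-L) L ×ˢ Set.Ici 0))
    (hutx_cont : ContinuousOn (fun p : ℝ × ℝ => utx p.1 p.2) (Set.Icc (-L) L ×ˢ Set.Ici 0))
    (hut : ∀ x ∈ Set.Icc (-L) L, ∀ t > (0:ℝ), HasDerivAt (fun s => u x s) (ut x t) t)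
    (hux : ∀ x ∈ Set.Icc (-L) L, ∀ t ≥ (0:ℝ), HasDerivAt (fun y => u y t) (ux x t) x)
    (huxx : ∀ x ∈ Set.Icc (-L) L, ∀ t ≥ (0:ℝ), HasDerivAt (fun y => ux y t) (uxx x t) x)
    (hutx : ∀ x ∈ Set.Icc (-L) L, ∀ t > (0:ℝ), HasDerivAt (fun s => ux x s) (utx x t) t)
    (hPDE : ∀ x ∈ Set.Ioo (-L) L, ∀ t > (0:ℝ),
      Complex.I * ut x t + (1/2 : ℂ) * uxx x t + (‖u x t‖ : ℂ)^2 * u x t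
        = f x t - Complex.I * (γ : ℂ) * u x t)
    (hBC : ∀ t ≥ (0:ℝ), u (-L) t = 0 ∧ u L t = 0 ∧ ux (-L) t = 0 ∧ ux L t = 0)
    (R R' R'' R₀ : ℝ)
    (hR : ∀ t ≥ (0:ℝ), (∫ x in (-L)..L, ‖u x t‖^2) ≤ R)
    (hR' : ∀ t ≥ (0:ℝ), (∫ x in (-L)..L, ‖ut x t‖^2) ≤ R')
    (hR'' : ∀ t ≥ (0:ℝ), ∀ x ∈ Set.Icc (-L) L, ‖u x t‖^2 ≤ R'')
    (hR₀ : ∀ t ≥ (0:ℝ), (∫ x in (-L)..L, (ρ x)^2 * ‖u x t‖^2) ≤ R₀)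
    (J : ℝ → ℝ)
    (hJ : ∀ s, J s = (1/4) * (∫ x in (-L)..L, (ρ x)^2 * ‖ux x s‖^2)
        - (1/4) * (∫ x in (-L)..L, (ρ x)^2 * ‖u x s‖^4)
        + (∫ x in (-L)..L, (ρ x : ℂ)^2 * (f x s * (starRingEnd ℂ) (u x s))).re) :
    ∀ t > (0:ℝ), ∃ J' : ℝ, HasDerivAt J J' t ∧
      J' + γ * J t + (γ/8) * (∫ x in (-L)..L, (ρ x)^2 * ‖ux x t‖^2)
        ≤ 4 * β₂^2 * R' / γ + 4 * β₂^2 * γ * R + 3 * γ * R'' * R₀ / 4 + R₀ / 2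
          + (1/2) * (∫ x in (-L)..L, (ρ x)^2 * ‖ft x t‖^2) := by
  intro t ht
  have hLL : (-L : ℝ) ≤ L := by linarith
  have cρ : Continuous ρ := continuous_iff_continuousAt.mpr (fun x => (hρ x).continuousAt)
  have hwin : Set.Icc (t - t/2) (t + t/2) ⊆ Set.Ici (0:ℝ) := by
    intro s hs; simp only [Set.mem_Ici]; have := hs.1; linarith
  have hball : Metric.ball t (t/2) ⊆ Set.Ioi (0:ℝ) := by
    rw [Real.ball_eq_Ioo]; intro s hs; simp only [Set.mem_Ioi]; have := hs.1; linarith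
  have ht2 : (0:ℝ) < t/2 := by linarith
  -- rectangle
  have rsub : Set.Icc (-L) L ×ˢ Set.Icc (t - t/2) (t + t/2) ⊆ Set.Icc (-L) L ×ˢ Set.Ici 0 :=
    Set.prod_mono subset_rfl hwin
  have rsubf : Set.Icc (-L) L ×ˢ Set.Icc (t - t/2) (t + t/2) ⊆ (Set.univ : Set ℝ) ×ˢ Set.Ici 0 :=
    Set.prod_mono (Set.subset_univ _) hwin
  have CP : Continuous (fun p : ℝ × ℝ => (ρ p.1)^2) := (cρ.comp continuous_fst).pow 2
  have CPP : Continuous (fun p : ℝ × ℝ => ρ p.1 * ρ' p.1) :=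
    (cρ.comp continuous_fst).mul (hρ'c.comp continuous_fst)
  have Cu := hu_cont.mono rsub
  have Cut := hut_cont.mono rsub
  have Cux := hux_cont.mono rsub
  have Cuxx := huxx_cont.mono rsub
  have Cutx := hutx_cont.mono rsub
  have Cf := hf.mono rsubf
  have Cft := hft_cont.mono rsubf
  -- time derivatives of the three integrals
  have d1 : HasDerivAt (fun s => ∫ x in (-L)..L, (ρ x)^2 * ‖ux x s‖^2)
      (∫ x in (-L)..L, (ρ x)^2 * (2 * (utx x t * (starRingEnd ℂ) (ux x t)).re)) t := by
    apply param_hasDerivAt hLL ht2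
      (fun x s => (ρ x)^2 * ‖ux x s‖^2)
      (fun x s => (ρ x)^2 * (2 * (utx x s * (starRingEnd ℂ) (ux x s)).re))
    · exact CP.continuousOn.mul (Cux.norm.pow 2)
    · exact CP.continuousOn.mul (continuousOn_const.mul
        (Complex.continuous_re.comp_continuousOn
          (Cutx.mul (Complex.continuous_conj.comp_continuousOn Cux))))
    · intro x hx s hs
      exact (hasDerivAt_norm_sq (hutx x hx s (hball hs))).const_mul ((ρ x)^2)
  have d2 : HasDerivAt (fun s => ∫ x in (-L)..L, (ρ x)^2 * ‖u x s‖^4)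
      (∫ x in (-L)..L, (ρ x)^2 * (4 * ‖u x t‖^2 * (ut x t * (starRingEnd ℂ) (u x t)).re)) t := by
    apply param_hasDerivAt hLL ht2
      (fun x s => (ρ x)^2 * ‖u x s‖^4)
      (fun x s => (ρ x)^2 * (4 * ‖u x s‖^2 * (ut x s * (starRingEnd ℂ) (u x s)).re))
    · exact CP.continuousOn.mul ((Cu.norm.pow 4))
    · exact CP.continuousOn.mul ((continuousOn_const.mul (Cu.norm.pow 2)).mul
        (Complex.continuous_re.comp_continuousOn
          (Cut.mul (Complex.continuous_conj.comp_continuousOn Cu))))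
    · intro x hx s hs
      have h2 := ((hasDerivAt_norm_sq (hut x hx s (hball hs))).pow 2).const_mul ((ρ x)^2)
      have hfun : (fun s => (ρ x)^2 * ‖u x s‖^4) = (fun s => (ρ x)^2 * (‖u x s‖^2)^2) := by
        funext s; ring
      rw [hfun]
      simp only [Pi.pow_apply] at h2
      exact h2.congr_deriv (by ring)
  have d3 : HasDerivAt (fun s => ∫ x in (-L)..L, (ρ x)^2 * (f x s * (starRingEnd ℂ) (u x s)).re)
      (∫ x in (-L)..L, (ρ x)^2 *
        ((ft x t * (starRingEnd ℂ) (u x t) + f x t * (starRingEnd ℂ) (ut x t)).re)) t := by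
    apply param_hasDerivAt hLL ht2
      (fun x s => (ρ x)^2 * (f x s * (starRingEnd ℂ) (u x s)).re)
      (fun x s => (ρ x)^2 * ((ft x s * (starRingEnd ℂ) (u x s) + f x s * (starRingEnd ℂ) (ut x s)).re))
    · exact CP.continuousOn.mul (Complex.continuous_re.comp_continuousOn
        (Cf.mul (Complex.continuous_conj.comp_continuousOn Cu)))
    · exact CP.continuousOn.mul (Complex.continuous_re.comp_continuousOn
        ((Cft.mul (Complex.continuous_conj.comp_continuousOn Cu)).add
          (Cf.mul (Complex.continuous_conj.comp_continuousOn Cut))))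
    · intro x hx s hs
      exact (hasDerivAt_cre ((hft x s (hball hs)).mul (hut x hx s (hball hs)).star)).const_mul
        ((ρ x)^2)
  -- rewrite of the real part of the complex integral
  have hre : ∀ s ≥ (0:ℝ), (∫ x in (-L)..L, (ρ x : ℂ)^2 * (f x s * (starRingEnd ℂ) (u x s))).re
      = ∫ x in (-L)..L, (ρ x)^2 * (f x s * (starRingEnd ℂ) (u x s)).re := by
    intro s hs
    have hcont : ContinuousOn (fun x => (ρ x : ℂ)^2 * (f x s * (starRingEnd ℂ) (u x s)))
        (Set.Icc (-L) L) := by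
      have hsl : ∀ (g : ℝ → ℝ → ℂ), ContinuousOn (fun p : ℝ × ℝ => g p.1 p.2)
          (Set.Icc (-L) L ×ˢ Set.Ici 0) → ContinuousOn (fun x => g x s) (Set.Icc (-L) L) :=
        fun g hg => hg.comp (f := fun x : ℝ => ((x, s) : ℝ × ℝ)) (by fun_prop)
          (fun x hx => ⟨hx, hs⟩)
      exact ((Complex.continuous_ofReal.comp cρ).pow 2).continuousOn.mul
        ((hsl f (hf.mono (Set.prod_mono (Set.subset_univ _) subset_rfl))).mul
          (Complex.continuous_conj.comp_continuousOn (hsl u hu_cont)))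
    have hint : IntervalIntegrable (fun x => (ρ x : ℂ)^2 * (f x s * (starRingEnd ℂ) (u x s)))
        volume (-L) L := ContinuousOn.intervalIntegrable (by rwa [Set.uIcc_of_le hLL])
    have hcomm := Complex.reCLM.integral_comp_comm
      ((intervalIntegrable_iff_integrableOn_Ioc_of_le hLL).mp hint)
    simp only [Complex.reCLM_apply] at hcomm
    rw [intervalIntegral.integral_of_le hLL, intervalIntegral.integral_of_le hLL, ← hcomm]
    apply setIntegral_congr_fun measurableSet_Ioc
    intro x _
    have hcast : ((ρ x : ℂ))^2 = ((ρ x ^2 : ℝ) : ℂ) := by push_cast; ring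
    simp only [hcast, Complex.re_ofReal_mul]
  -- derivative of J
  set DA := ∫ x in (-L)..L, (ρ x)^2 * (2 * (utx x t * (starRingEnd ℂ) (ux x t)).re) with hDA
  set DB := ∫ x in (-L)..L, (ρ x)^2 * (4 * ‖u x t‖^2 * (ut x t * (starRingEnd ℂ) (u x t)).re)
    with hDB
  set DC := ∫ x in (-L)..L, (ρ x)^2 *
      ((ft x t * (starRingEnd ℂ) (u x t) + f x t * (starRingEnd ℂ) (ut x t)).re) with hDC
  refine ⟨(1/4) * DA - (1/4) * DB + DC, ?_, ?_⟩
  · have hD := ((d1.const_mul (1/4 : ℝ)).sub (d2.const_mul (1/4 : ℝ))).add d3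
    apply hD.congr_of_eventuallyEq
    filter_upwards [eventually_gt_nhds ht] with s hs
    rw [hJ s, hre s hs.le]
    rfl

  · -- the main estimate
    -- slice continuity at time t
    have slice : ∀ (g : ℝ → ℝ → ℂ), ContinuousOn (fun p : ℝ × ℝ => g p.1 p.2)
        (Set.Icc (-L) L ×ˢ Set.Ici 0) → ContinuousOn (fun x => g x t) (Set.Icc (-L) L) :=
      fun g hg => hg.comp (f := fun x : ℝ => ((x, t) : ℝ × ℝ)) (by fun_prop)
        (fun x hx => ⟨hx, ht.le⟩)
    have cu := slice u hu_cont
    have cut := slice ut hut_cont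
    have cux := slice ux hux_cont
    have cuxx := slice uxx huxx_cont
    have cutx := slice utx hutx_cont
    have cf := slice f (hf.mono (Set.prod_mono (Set.subset_univ _) subset_rfl))
    have cft := slice ft (hft_cont.mono (Set.prod_mono (Set.subset_univ _) subset_rfl))
    have mkint : ∀ (g : ℝ → ℝ), ContinuousOn g (Set.Icc (-L) L) →
        IntervalIntegrable g volume (-L) L :=
      fun g hg => ContinuousOn.intervalIntegrable (by rwa [Set.uIcc_of_le hLL])
    have crm : ∀ (g h : ℝ → ℂ), ContinuousOn g (Set.Icc (-L) L) →
        ContinuousOn h (Set.Icc (-L) L) →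
        ContinuousOn (fun x => (g x * (starRingEnd ℂ) (h x)).re) (Set.Icc (-L) L) :=
      fun g h hg hh => Complex.continuous_re.comp_continuousOn
        (hg.mul (Complex.continuous_conj.comp_continuousOn hh))
    have cim : ∀ (g h : ℝ → ℂ), ContinuousOn g (Set.Icc (-L) L) →
        ContinuousOn h (Set.Icc (-L) L) →
        ContinuousOn (fun x => (g x * (starRingEnd ℂ) (h x)).im) (Set.Icc (-L) L) :=
      fun g h hg hh => Complex.continuous_im.comp_continuousOn
        (hg.mul (Complex.continuous_conj.comp_continuousOn hh))
    have cρ2 : ContinuousOn (fun x => (ρ x)^2) (Set.Icc (-L) L) := (cρ.pow 2).continuousOn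
    have cρρ' : ContinuousOn (fun x => ρ x * ρ' x) (Set.Icc (-L) L) := (cρ.mul hρ'c).continuousOn
    -- integrability of all basic integrands
    have i1 : IntervalIntegrable (fun x => (ρ x)^2 * ‖ux x t‖^2) volume (-L) L :=
      mkint _ (cρ2.mul (cux.norm.pow 2))
    have i2 : IntervalIntegrable (fun x => (ρ x)^2 * ‖u x t‖^4) volume (-L) L :=
      mkint _ (cρ2.mul (cu.norm.pow 4))
    have i3 : IntervalIntegrable (fun x => (ρ x)^2 * (f x t * (starRingEnd ℂ) (u x t)).re)
        volume (-L) L := mkint _ (cρ2.mul (crm _ _ cf cu))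
    have i4 : IntervalIntegrable (fun x => ρ x * ρ' x * (ut x t * (starRingEnd ℂ) (ux x t)).re)
        volume (-L) L := mkint _ (cρρ'.mul (crm _ _ cut cux))
    have i5 : IntervalIntegrable (fun x => (ρ x)^2 * (utx x t * (starRingEnd ℂ) (ux x t)).re)
        volume (-L) L := mkint _ (cρ2.mul (crm _ _ cutx cux))
    have i6 : IntervalIntegrable (fun x => (ρ x)^2 * (ut x t * (starRingEnd ℂ) (uxx x t)).re)
        volume (-L) L := mkint _ (cρ2.mul (crm _ _ cut cuxx))
    have i7 : IntervalIntegrable (fun x => (ρ x)^2 * (ut x t * (starRingEnd ℂ) (f x t)).re)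
        volume (-L) L := mkint _ (cρ2.mul (crm _ _ cut cf))
    have i8 : IntervalIntegrable (fun x => (ρ x)^2 * (ut x t * (starRingEnd ℂ) (u x t)).im)
        volume (-L) L := mkint _ (cρ2.mul (cim _ _ cut cu))
    have i9 : IntervalIntegrable
        (fun x => (ρ x)^2 * (‖u x t‖^2 * (ut x t * (starRingEnd ℂ) (u x t)).re))
        volume (-L) L := mkint _ (cρ2.mul ((cu.norm.pow 2).mul (crm _ _ cut cu)))
    have i10 : IntervalIntegrable (fun x => ρ x * ρ' x * (ux x t * (starRingEnd ℂ) (u x t)).re)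
        volume (-L) L := mkint _ (cρρ'.mul (crm _ _ cux cu))
    have i11 : IntervalIntegrable (fun x => (ρ x)^2 * (uxx x t * (starRingEnd ℂ) (u x t)).re)
        volume (-L) L := mkint _ (cρ2.mul (crm _ _ cuxx cu))
    have i12 : IntervalIntegrable (fun x => (ρ x)^2 * (ft x t * (starRingEnd ℂ) (u x t)).re)
        volume (-L) L := mkint _ (cρ2.mul (crm _ _ cft cu))
    have iρu : IntervalIntegrable (fun x => (ρ x)^2 * ‖u x t‖^2) volume (-L) L :=
      mkint _ (cρ2.mul (cu.norm.pow 2))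
    have iu : IntervalIntegrable (fun x => ‖u x t‖^2) volume (-L) L :=
      mkint _ (cu.norm.pow 2)
    have iut : IntervalIntegrable (fun x => ‖ut x t‖^2) volume (-L) L :=
      mkint _ (cut.norm.pow 2)
    have ift : IntervalIntegrable (fun x => (ρ x)^2 * ‖ft x t‖^2) volume (-L) L :=
      mkint _ (cρ2.mul (cft.norm.pow 2))
    have i3n : IntervalIntegrable
        (fun x => -((ρ x)^2 * (f x t * (starRingEnd ℂ) (u x t)).re)) volume (-L) L := i3.neg
    have i4n : IntervalIntegrable
        (fun x => -(ρ x * ρ' x * (ut x t * (starRingEnd ℂ) (ux x t)).re)) volume (-L) L := i4.neg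
    -- boundary values
    obtain ⟨hBu1, hBu2, hBx1, hBx2⟩ := hBC t ht.le
    have hutbd : ∀ (y : ℝ), y ∈ Set.Icc (-L) L → (∀ s ≥ (0:ℝ), u y s = 0) → ut y t = 0 := by
      intro y hy h0
      refine (hut y hy t ht).unique ?_
      apply (hasDerivAt_const t (0:ℂ)).congr_of_eventuallyEq
      filter_upwards [eventually_gt_nhds ht] with s hs using h0 s hs.le
    have hutL : ut (-L) t = 0 := hutbd (-L) ⟨le_refl _, hLL⟩ (fun s hs => (hBC s hs).1)
    have hutR : ut L t = 0 := hutbd L ⟨hLL, le_refl _⟩ (fun s hs => (hBC s hs).2.1)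
    have hsch : ∀ x ∈ Set.Ioo (-L) L, HasDerivAt (fun y => ut y t) (utx x t) x :=
      fun x hx => schwarz_mixed L u ut ux utx hux_cont hutx_cont hut hux hutx ht hx
    -- integration by parts 1
    have ibp1 : (∫ x in (-L)..L,
        (2*(ρ x * ρ' x * (ut x t * (starRingEnd ℂ) (ux x t)).re)
          + ((ρ x)^2 * (utx x t * (starRingEnd ℂ) (ux x t)).re
            + (ρ x)^2 * (ut x t * (starRingEnd ℂ) (uxx x t)).re))) = 0 := by
      have hder : ∀ y ∈ Set.Ioo (-L) L,
          HasDerivWithinAt (fun y => (ρ y)^2 * (ut y t * (starRingEnd ℂ) (ux y t)).re)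
            (2*(ρ y * ρ' y * (ut y t * (starRingEnd ℂ) (ux y t)).re)
              + ((ρ y)^2 * (utx y t * (starRingEnd ℂ) (ux y t)).re
                + (ρ y)^2 * (ut y t * (starRingEnd ℂ) (uxx y t)).re)) (Set.Ioi y) y := by
        intro y hy
        have hy' : y ∈ Set.Icc (-L) L := Set.Ioo_subset_Icc_self hy
        have hAB := ((hρ y).pow 2).mul
          (hasDerivAt_cre ((hsch y hy).mul ((huxx y hy' t ht.le).star)))
        have hval : (2*(ρ y * ρ' y * (ut y t * (starRingEnd ℂ) (ux y t)).re)
              + ((ρ y)^2 * (utx y t * (starRingEnd ℂ) (ux y t)).re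
                + (ρ y)^2 * (ut y t * (starRingEnd ℂ) (uxx y t)).re))
            = (↑2 * ρ y ^ (2-1) * ρ' y) * (ut y t * (starRingEnd ℂ) (ux y t)).re
              + ρ y ^ 2 * (utx y t * (starRingEnd ℂ) (ux y t)
                  + ut y t * (starRingEnd ℂ) (uxx y t)).re := by
          simp [Complex.add_re]; ring
        rw [hval]
        exact hAB.hasDerivWithinAt
      have heq := intervalIntegral.integral_eq_sub_of_hasDeriv_right_of_le hLL
        (cρ2.mul (crm _ _ cut cux)) hder
        (((i4.const_mul 2).add (i5.add i6)))
      rw [heq]; simp only [Pi.mul_apply]; rw [hBx2, hBx1]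
      simp
    -- integration by parts 2
    have ibp2 : (∫ x in (-L)..L,
        (2*(ρ x * ρ' x * (ux x t * (starRingEnd ℂ) (u x t)).re)
          + ((ρ x)^2 * (uxx x t * (starRingEnd ℂ) (u x t)).re
            + (ρ x)^2 * ‖ux x t‖^2))) = 0 := by
      have hder : ∀ y ∈ Set.Ioo (-L) L,
          HasDerivWithinAt (fun y => (ρ y)^2 * (ux y t * (starRingEnd ℂ) (u y t)).re)
            (2*(ρ y * ρ' y * (ux y t * (starRingEnd ℂ) (u y t)).re)
              + ((ρ y)^2 * (uxx y t * (starRingEnd ℂ) (u y t)).re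
                + (ρ y)^2 * ‖ux y t‖^2)) (Set.Ioi y) y := by
        intro y hy
        have hy' : y ∈ Set.Icc (-L) L := Set.Ioo_subset_Icc_self hy
        have hAB := ((hρ y).pow 2).mul
          (hasDerivAt_cre ((huxx y hy' t ht.le).mul ((hux y hy' t ht.le).star)))
        have hval : (2*(ρ y * ρ' y * (ux y t * (starRingEnd ℂ) (u y t)).re)
              + ((ρ y)^2 * (uxx y t * (starRingEnd ℂ) (u y t)).re
                + (ρ y)^2 * ‖ux y t‖^2))
            = (↑2 * ρ y ^ (2-1) * ρ' y) * (ux y t * (starRingEnd ℂ) (u y t)).re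
              + ρ y ^ 2 * (uxx y t * (starRingEnd ℂ) (u y t)
                  + ux y t * (starRingEnd ℂ) (ux y t)).re := by
          rw [Complex.add_re, ← norm_sq_eq_re_mul_conj]; ring
        rw [hval]
        exact hAB.hasDerivWithinAt
      have heq := intervalIntegral.integral_eq_sub_of_hasDeriv_right_of_le hLL
        (cρ2.mul (crm _ _ cux cu)) hder
        (((i10.const_mul 2).add (i11.add i1)))
      rw [heq]; simp only [Pi.mul_apply]; rw [hBu2, hBu1]
      simp
    -- split the ibp identities
    rw [intervalIntegral.integral_add (i4.const_mul 2) (i5.add i6),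
      intervalIntegral.integral_add i5 i6, intervalIntegral.integral_const_mul] at ibp1
    rw [intervalIntegral.integral_add (i10.const_mul 2) (i11.add i1),
      intervalIntegral.integral_add i11 i1, intervalIntegral.integral_const_mul] at ibp2
    -- pointwise PDE identities, integrated
    have haeL : ∀ᵐ (x : ℝ) ∂volume, x ≠ L :=
      compl_mem_ae_iff.mpr (measure_singleton L)
    have eq3 : (∫ x in (-L)..L, (ρ x)^2 * (ut x t * (starRingEnd ℂ) (uxx x t)).re)
        = (∫ x in (-L)..L,
            (2*((ρ x)^2 * (ut x t * (starRingEnd ℂ) (f x t)).re)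
              - (2*γ)*((ρ x)^2 * (ut x t * (starRingEnd ℂ) (u x t)).im))
              - 2*((ρ x)^2 * (‖u x t‖^2 * (ut x t * (starRingEnd ℂ) (u x t)).re))) := by
      apply intervalIntegral.integral_congr_ae
      filter_upwards [haeL] with x hxL hxI
      rw [Set.uIoc_of_le hLL] at hxI
      have hxIoo : x ∈ Set.Ioo (-L) L := ⟨hxI.1, lt_of_le_of_ne hxI.2 hxL⟩
      rw [alg1 γ (u x t) (ut x t) (uxx x t) (f x t) (hPDE x hxIoo t ht)]
      ring
    rw [intervalIntegral.integral_sub ((i7.const_mul 2).sub (i8.const_mul (2*γ)))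
        (i9.const_mul 2),
      intervalIntegral.integral_sub (i7.const_mul 2) (i8.const_mul (2*γ)),
      intervalIntegral.integral_const_mul, intervalIntegral.integral_const_mul,
      intervalIntegral.integral_const_mul] at eq3
    have eq4 : (∫ x in (-L)..L, (ρ x)^2 * (ut x t * (starRingEnd ℂ) (u x t)).im)
        = (∫ x in (-L)..L,
            (-((ρ x)^2 * (f x t * (starRingEnd ℂ) (u x t)).re)
              + (1/2)*((ρ x)^2 * (uxx x t * (starRingEnd ℂ) (u x t)).re))
              + (ρ x)^2 * ‖u x t‖^4) := by
      apply intervalIntegral.integral_congr_ae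
      filter_upwards [haeL] with x hxL hxI
      rw [Set.uIoc_of_le hLL] at hxI
      have hxIoo : x ∈ Set.Ioo (-L) L := ⟨hxI.1, lt_of_le_of_ne hxI.2 hxL⟩
      rw [alg2 γ (u x t) (ut x t) (uxx x t) (f x t) (hPDE x hxIoo t ht)]
      ring
    rw [intervalIntegral.integral_add (i3n.add (i11.const_mul (1/2))) i2,
      intervalIntegral.integral_add i3n (i11.const_mul (1/2)),
      intervalIntegral.integral_neg, intervalIntegral.integral_const_mul] at eq4
    -- rewrite DA, DB, DC
    have hda : DA = 2*(∫ x in (-L)..L, (ρ x)^2 * (utx x t * (starRingEnd ℂ) (ux x t)).re) := by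
      rw [hDA, ← intervalIntegral.integral_const_mul]
      apply intervalIntegral.integral_congr
      intro x _
      ring
    have hdb : DB = 4*(∫ x in (-L)..L,
        (ρ x)^2 * (‖u x t‖^2 * (ut x t * (starRingEnd ℂ) (u x t)).re)) := by
      rw [hDB, ← intervalIntegral.integral_const_mul]
      apply intervalIntegral.integral_congr
      intro x _
      ring
    have hdc : DC = (∫ x in (-L)..L, (ρ x)^2 * (ft x t * (starRingEnd ℂ) (u x t)).re)
        + (∫ x in (-L)..L, (ρ x)^2 * (ut x t * (starRingEnd ℂ) (f x t)).re) := by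
      rw [hDC, ← intervalIntegral.integral_add i12 i7]
      apply intervalIntegral.integral_congr
      intro x _
      simp only [Complex.add_re, Complex.mul_re, Complex.conj_re, Complex.conj_im]
      ring
    have hJt : J t = (1/4)*(∫ x in (-L)..L, (ρ x)^2 * ‖ux x t‖^2)
        - (1/4)*(∫ x in (-L)..L, (ρ x)^2 * ‖u x t‖^4)
        + (∫ x in (-L)..L, (ρ x)^2 * (f x t * (starRingEnd ℂ) (u x t)).re) := by
      rw [hJ t, hre t ht.le]
    -- the key linear identity
    have key : (1/4) * DA - (1/4) * DB + DC + γ * J t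
          + (γ/8) * (∫ x in (-L)..L, (ρ x)^2 * ‖ux x t‖^2)
        = -(∫ x in (-L)..L, ρ x * ρ' x * (ut x t * (starRingEnd ℂ) (ux x t)).re)
          + (∫ x in (-L)..L, (ρ x)^2 * (ft x t * (starRingEnd ℂ) (u x t)).re)
          - γ*(∫ x in (-L)..L, ρ x * ρ' x * (ux x t * (starRingEnd ℂ) (u x t)).re)
          + (3*γ/4)*(∫ x in (-L)..L, (ρ x)^2 * ‖u x t‖^4)
          - (γ/8)*(∫ x in (-L)..L, (ρ x)^2 * ‖ux x t‖^2) := by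
      rw [hda, hdb, hdc, hJt]
      linear_combination (1/2)*ibp1 - (1/2)*eq3 + γ*eq4 + (γ/2)*ibp2
    rw [key]
    -- combine into a single integral and estimate
    have eqW : (∫ x in (-L)..L,
          ((((-(ρ x * ρ' x * (ut x t * (starRingEnd ℂ) (ux x t)).re)
            + (ρ x)^2 * (ft x t * (starRingEnd ℂ) (u x t)).re)
            - γ*(ρ x * ρ' x * (ux x t * (starRingEnd ℂ) (u x t)).re))
            + (3*γ/4)*((ρ x)^2 * ‖u x t‖^4))
            - (γ/8)*((ρ x)^2 * ‖ux x t‖^2)))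
        = -(∫ x in (-L)..L, ρ x * ρ' x * (ut x t * (starRingEnd ℂ) (ux x t)).re)
          + (∫ x in (-L)..L, (ρ x)^2 * (ft x t * (starRingEnd ℂ) (u x t)).re)
          - γ*(∫ x in (-L)..L, ρ x * ρ' x * (ux x t * (starRingEnd ℂ) (u x t)).re)
          + (3*γ/4)*(∫ x in (-L)..L, (ρ x)^2 * ‖u x t‖^4)
          - (γ/8)*(∫ x in (-L)..L, (ρ x)^2 * ‖ux x t‖^2) := by
      rw [intervalIntegral.integral_sub
          (((i4n.add i12).sub (i10.const_mul γ)).add (i2.const_mul (3*γ/4)))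
          (i1.const_mul (γ/8)),
        intervalIntegral.integral_add ((i4n.add i12).sub (i10.const_mul γ))
          (i2.const_mul (3*γ/4)),
        intervalIntegral.integral_sub (i4n.add i12) (i10.const_mul γ),
        intervalIntegral.integral_add i4n i12, intervalIntegral.integral_neg,
        intervalIntegral.integral_const_mul, intervalIntegral.integral_const_mul,
        intervalIntegral.integral_const_mul]
    rw [← eqW]
    -- pointwise bound
    have hWle : ∀ x ∈ Set.Icc (-L) L,
        ((((-(ρ x * ρ' x * (ut x t * (starRingEnd ℂ) (ux x t)).re)
          + (ρ x)^2 * (ft x t * (starRingEnd ℂ) (u x t)).re)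
          - γ*(ρ x * ρ' x * (ux x t * (starRingEnd ℂ) (u x t)).re))
          + (3*γ/4)*((ρ x)^2 * ‖u x t‖^4))
          - (γ/8)*((ρ x)^2 * ‖ux x t‖^2))
        ≤ (3*γ*R''/4)*((ρ x)^2 * ‖u x t‖^2) + (4*γ*β₂^2)*‖u x t‖^2
          + (4*β₂^2/γ)*‖ut x t‖^2 + (1/2)*((ρ x)^2 * ‖ft x t‖^2)
          + (1/2)*((ρ x)^2 * ‖u x t‖^2) := by
      intro x hx
      have hp := hρpos x
      have hq := hρ'b x
      have hnu : ‖u x t‖^2 ≤ R'' := hR'' t ht.le x hx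
      have habs : ∀ (z w : ℂ), |(z * (starRingEnd ℂ) w).re| ≤ ‖z‖ * ‖w‖ := by
        intro z w
        calc |(z * (starRingEnd ℂ) w).re| ≤ ‖z * (starRingEnd ℂ) w‖ := by
              exact Complex.abs_re_le_norm _
          _ = ‖z‖ * ‖w‖ := by rw [norm_mul, RCLike.norm_conj]
      have hb1 : -(ρ x * ρ' x * (ut x t * (starRingEnd ℂ) (ux x t)).re)
          ≤ β₂*(ρ x*(‖ut x t‖*‖ux x t‖)) := by
        have h1 : |ρ' x * (ut x t * (starRingEnd ℂ) (ux x t)).re| ≤ β₂*(‖ut x t‖*‖ux x t‖) := by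
          rw [abs_mul]
          exact mul_le_mul hq (habs _ _) (abs_nonneg _) hβ₂.le
        calc -(ρ x * ρ' x * (ut x t * (starRingEnd ℂ) (ux x t)).re)
            = ρ x * (-(ρ' x * (ut x t * (starRingEnd ℂ) (ux x t)).re)) := by ring
          _ ≤ ρ x * |ρ' x * (ut x t * (starRingEnd ℂ) (ux x t)).re| :=
              mul_le_mul_of_nonneg_left (neg_le_abs _) hp.le
          _ ≤ ρ x * (β₂*(‖ut x t‖*‖ux x t‖)) := mul_le_mul_of_nonneg_left h1 hp.le
          _ = β₂*(ρ x*(‖ut x t‖*‖ux x t‖)) := by ring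
      have hb2 : -(γ*(ρ x * ρ' x * (ux x t * (starRingEnd ℂ) (u x t)).re))
          ≤ γ*(β₂*(ρ x*(‖ux x t‖*‖u x t‖))) := by
        have h1 : |ρ' x * (ux x t * (starRingEnd ℂ) (u x t)).re| ≤ β₂*(‖ux x t‖*‖u x t‖) := by
          rw [abs_mul]
          exact mul_le_mul hq (habs _ _) (abs_nonneg _) hβ₂.le
        have h2 : -(ρ x * ρ' x * (ux x t * (starRingEnd ℂ) (u x t)).re)
            ≤ β₂*(ρ x*(‖ux x t‖*‖u x t‖)) := by
          calc -(ρ x * ρ' x * (ux x t * (starRingEnd ℂ) (u x t)).re)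
              = ρ x * (-(ρ' x * (ux x t * (starRingEnd ℂ) (u x t)).re)) := by ring
            _ ≤ ρ x * |ρ' x * (ux x t * (starRingEnd ℂ) (u x t)).re| :=
                mul_le_mul_of_nonneg_left (neg_le_abs _) hp.le
            _ ≤ ρ x * (β₂*(‖ux x t‖*‖u x t‖)) := mul_le_mul_of_nonneg_left h1 hp.le
            _ = β₂*(ρ x*(‖ux x t‖*‖u x t‖)) := by ring
        calc -(γ*(ρ x * ρ' x * (ux x t * (starRingEnd ℂ) (u x t)).re))
            = γ * (-(ρ x * ρ' x * (ux x t * (starRingEnd ℂ) (u x t)).re)) := by ring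
          _ ≤ γ*(β₂*(ρ x*(‖ux x t‖*‖u x t‖))) := mul_le_mul_of_nonneg_left h2 hγ.le
      have hb3 : (ρ x)^2 * (ft x t * (starRingEnd ℂ) (u x t)).re
          ≤ (ρ x)^2 * (‖ft x t‖*‖u x t‖) :=
        mul_le_mul_of_nonneg_left (le_trans (le_abs_self _) (habs _ _)) (sq_nonneg _)
      have hy1 : β₂*(ρ x*(‖ut x t‖*‖ux x t‖))
          ≤ (γ/16)*((ρ x)^2 * ‖ux x t‖^2) + (4*β₂^2/γ)*‖ut x t‖^2 := by
        have hE : (γ/16)*((ρ x)^2 * ‖ux x t‖^2) + (4*β₂^2/γ)*‖ut x t‖^2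
            - β₂*(ρ x*(‖ut x t‖*‖ux x t‖))
            = (γ*(ρ x*‖ux x t‖)/4 - 2*β₂*‖ut x t‖)^2 / γ := by
          field_simp
          ring
        rw [← sub_nonneg, hE]
        exact div_nonneg (sq_nonneg _) hγ.le
      have hy2 : γ*(β₂*(ρ x*(‖ux x t‖*‖u x t‖)))
          ≤ (γ/16)*((ρ x)^2 * ‖ux x t‖^2) + (4*γ*β₂^2)*‖u x t‖^2 := by
        have hE2 : (γ/16)*((ρ x)^2 * ‖ux x t‖^2) + (4*γ*β₂^2)*‖u x t‖^2
            - γ*(β₂*(ρ x*(‖ux x t‖*‖u x t‖)))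
            = γ * (ρ x*‖ux x t‖/4 - 2*β₂*‖u x t‖)^2 := by ring
        rw [← sub_nonneg, hE2]
        exact mul_nonneg hγ.le (sq_nonneg _)
      have hy3 : (ρ x)^2 * (‖ft x t‖*‖u x t‖)
          ≤ (1/2)*((ρ x)^2 * ‖ft x t‖^2) + (1/2)*((ρ x)^2 * ‖u x t‖^2) := by
        have hE3 : (1/2)*((ρ x)^2 * ‖ft x t‖^2) + (1/2)*((ρ x)^2 * ‖u x t‖^2)
            - (ρ x)^2 * (‖ft x t‖*‖u x t‖)
            = (ρ x)^2 * (‖ft x t‖ - ‖u x t‖)^2 / 2 := by ring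
        rw [← sub_nonneg, hE3]
        positivity
      have hy4 : (3*γ/4)*((ρ x)^2 * ‖u x t‖^4)
          ≤ (3*γ*R''/4)*((ρ x)^2 * ‖u x t‖^2) := by
        have h44 : ‖u x t‖^4 ≤ R''*‖u x t‖^2 := by
          have := mul_le_mul_of_nonneg_left hnu (sq_nonneg (‖u x t‖))
          calc ‖u x t‖^4 = ‖u x t‖^2 * ‖u x t‖^2 := by ring
            _ ≤ ‖u x t‖^2 * R'' := this
            _ = R'' * ‖u x t‖^2 := by ring
        calc (3*γ/4)*((ρ x)^2 * ‖u x t‖^4)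
            ≤ (3*γ/4)*((ρ x)^2 * (R''*‖u x t‖^2)) := by
              apply mul_le_mul_of_nonneg_left
                (mul_le_mul_of_nonneg_left h44 (sq_nonneg (ρ x))) (by positivity)
          _ = (3*γ*R''/4)*((ρ x)^2 * ‖u x t‖^2) := by ring
      linarith [hb1, hb2, hb3, hy1, hy2, hy3, hy4]
    have intW : IntervalIntegrable (fun x =>
        ((((-(ρ x * ρ' x * (ut x t * (starRingEnd ℂ) (ux x t)).re)
          + (ρ x)^2 * (ft x t * (starRingEnd ℂ) (u x t)).re)
          - γ*(ρ x * ρ' x * (ux x t * (starRingEnd ℂ) (u x t)).re))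
          + (3*γ/4)*((ρ x)^2 * ‖u x t‖^4))
          - (γ/8)*((ρ x)^2 * ‖ux x t‖^2))) volume (-L) L :=
      (((i4n.add i12).sub (i10.const_mul γ)).add (i2.const_mul (3*γ/4))).sub
        (i1.const_mul (γ/8))
    have intV : IntervalIntegrable (fun x =>
        (3*γ*R''/4)*((ρ x)^2 * ‖u x t‖^2) + (4*γ*β₂^2)*‖u x t‖^2
          + (4*β₂^2/γ)*‖ut x t‖^2 + (1/2)*((ρ x)^2 * ‖ft x t‖^2)
          + (1/2)*((ρ x)^2 * ‖u x t‖^2)) volume (-L) L :=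
      ((((iρu.const_mul (3*γ*R''/4)).add (iu.const_mul (4*γ*β₂^2))).add
        (iut.const_mul (4*β₂^2/γ))).add (ift.const_mul (1/2))).add (iρu.const_mul (1/2))
    have hmono := intervalIntegral.integral_mono_on hLL intW intV hWle
    have eqV : (∫ x in (-L)..L,
          ((3*γ*R''/4)*((ρ x)^2 * ‖u x t‖^2) + (4*γ*β₂^2)*‖u x t‖^2
            + (4*β₂^2/γ)*‖ut x t‖^2 + (1/2)*((ρ x)^2 * ‖ft x t‖^2)
            + (1/2)*((ρ x)^2 * ‖u x t‖^2)))
        = (3*γ*R''/4)*(∫ x in (-L)..L, (ρ x)^2 * ‖u x t‖^2)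
          + (4*γ*β₂^2)*(∫ x in (-L)..L, ‖u x t‖^2)
          + (4*β₂^2/γ)*(∫ x in (-L)..L, ‖ut x t‖^2)
          + (1/2)*(∫ x in (-L)..L, (ρ x)^2 * ‖ft x t‖^2)
          + (1/2)*(∫ x in (-L)..L, (ρ x)^2 * ‖u x t‖^2) := by
      rw [intervalIntegral.integral_add
          ((((iρu.const_mul (3*γ*R''/4)).add (iu.const_mul (4*γ*β₂^2))).add
            (iut.const_mul (4*β₂^2/γ))).add (ift.const_mul (1/2))) (iρu.const_mul (1/2)),
        intervalIntegral.integral_add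
          (((iρu.const_mul (3*γ*R''/4)).add (iu.const_mul (4*γ*β₂^2))).add
            (iut.const_mul (4*β₂^2/γ))) (ift.const_mul (1/2)),
        intervalIntegral.integral_add
          ((iρu.const_mul (3*γ*R''/4)).add (iu.const_mul (4*γ*β₂^2)))
          (iut.const_mul (4*β₂^2/γ)),
        intervalIntegral.integral_add (iρu.const_mul (3*γ*R''/4)) (iu.const_mul (4*γ*β₂^2)),
        intervalIntegral.integral_const_mul, intervalIntegral.integral_const_mul,
        intervalIntegral.integral_const_mul, intervalIntegral.integral_const_mul,
        intervalIntegral.integral_const_mul]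
    rw [eqV] at hmono
    -- final numeric bound
    have hR''0 : 0 ≤ R'' :=
      le_trans (by positivity) (hR'' 0 le_rfl 0 ⟨by linarith, by linarith⟩)
    have hX1 := hR₀ t ht.le
    have hX2 := hR t ht.le
    have hX3 := hR' t ht.le
    have hc1 : (0:ℝ) ≤ 3*γ*R''/4 := by positivity
    have hc2 : (0:ℝ) ≤ 4*γ*β₂^2 := by positivity
    have hc3 : (0:ℝ) ≤ 4*β₂^2/γ := by positivity
    have hm1 := mul_le_mul_of_nonneg_left hX1 hc1
    have hm2 := mul_le_mul_of_nonneg_left hX2 hc2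
    have hm3 := mul_le_mul_of_nonneg_left hX3 hc3
    have hm4 := mul_le_mul_of_nonneg_left hX1 (by norm_num : (0:ℝ) ≤ 1/2)
    calc _ ≤ _ := hmono
      _ ≤ 4 * β₂^2 * R' / γ + 4 * β₂^2 * γ * R + 3 * γ * R'' * R₀ / 4 + R₀ / 2
          + (1/2) * (∫ x in (-L)..L, (ρ x)^2 * ‖ft x t‖^2) := by
        have h1 : 4*β₂^2/γ*R' = 4 * β₂^2 * R' / γ := by ring
        have h2 : 4*γ*β₂^2*R = 4 * β₂^2 * γ * R := by ring
        have h3 : 3*γ*R''/4*R₀ = 3 * γ * R'' * R₀ / 4 := by ring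
        have h4 : (1/2)*R₀ = R₀/2 := by ring
        linarith [hm1, hm2, hm3, hm4]
end

section
/- (Unconditional time-decay of the L² norm, Proposition 2.2, case 1.) Let L > 0, γ > 0, δ₂ > 0, let φ : [0,∞) → ℝ be continuously differentiable with φ(t) > 0 and |φ'(t)| ≤ δ₂ for all t ≥ 0, let f : ℝ × [0,∞) → ℂ be continuous, and let u be a classical solution of i∂_t u + (1/2)∂_x²u + |u|²u = f − iγu on (−L,L)×(0,∞) with u(±L,t) = 0 for all t ≥ 0. Assume ∫₀^∞ ∫_{−L}^{L} φ(t)²|f(x,t)|² dx dt < ∞ and ∫₀^∞ ∫_{−L}^{L} |u(x,t)|² dx dt < ∞. Then, with K₀ = (1/2)φ(0)²∫_{−L}^{L}|u(x,0)|²dx + (1/γ)∫₀^∞∫_{−L}^{L}φ²|f|²dxdt + (δ₂²/γ)∫₀^∞∫_{−L}^{L}|u|²dxdt, one has ∫_{−L}^{L} |u(x,t)|² dx ≤ 2K₀/φ(t)² for all t > 0. -/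
open MeasureTheory

section NLSHelpers
open intervalIntegral

lemma hd_re {v : ℝ → ℂ} {v' : ℂ} {t : ℝ} (h : HasDerivAt v v' t) :
    HasDerivAt (fun s => (v s).re) v'.re t :=
  (Complex.reCLM.hasFDerivAt.comp_hasDerivAt t h)

lemma hd_im {v : ℝ → ℂ} {v' : ℂ} {t : ℝ} (h : HasDerivAt v v' t) :
    HasDerivAt (fun s => (v s).im) v'.im t :=
  (Complex.imCLM.hasFDerivAt.comp_hasDerivAt t h)

lemma hd_normsq {v : ℝ → ℂ} {v' : ℂ} {t : ℝ} (h : HasDerivAt v v' t) :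
    HasDerivAt (fun s => ‖v s‖^2) (2*((v t).re*v'.re + (v t).im*v'.im)) t := by
  have h1 := ((hd_re h).mul (hd_re h)).add ((hd_im h).mul (hd_im h))
  have hfun : (fun s => ‖v s‖^2) = fun s => (v s).re*(v s).re + (v s).im*(v s).im := by
    funext s
    rw [← Complex.normSq_apply, Complex.normSq_eq_norm_sq]
  rw [hfun]
  exact h1.congr_deriv (by ring)

section helpers
variable {L : ℝ}

lemma slice_contOn (hL : 0 < L) {v : ℝ → ℝ → ℂ}
    (hv : ContinuousOn (fun p : ℝ × ℝ => v p.1 p.2) (Set.Icc (-L) L ×ˢ Set.Ici 0))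
    {t : ℝ} (ht : 0 ≤ t) : ContinuousOn (fun x => v x t) (Set.Icc (-L) L) := by
  have : ContinuousOn (fun x : ℝ => ((x, t) : ℝ × ℝ)) (Set.Icc (-L) L) :=
    (continuous_id.prodMk continuous_const).continuousOn
  exact hv.comp this (fun x hx => ⟨hx, ht⟩)

lemma paramInt_contOn (hL : 0 < L) {v : ℝ → ℝ → ℂ}
    (hv : ContinuousOn (fun p : ℝ × ℝ => v p.1 p.2) (Set.Icc (-L) L ×ˢ Set.Ici 0)) :
    ContinuousOn (fun t => ∫ x in (-L)..L, ‖v x t‖^2) (Set.Ici 0) := by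
  intro t₀ ht₀
  have hll : -L ≤ L := by linarith
  have huIoc : Set.uIoc (-L) L = Set.Ioc (-L) L := Set.uIoc_of_le hll
  -- compact set and bound
  have hKcp : IsCompact (Set.Icc (-L) L ×ˢ Set.Icc (0:ℝ) (t₀+1)) :=
    isCompact_Icc.prod isCompact_Icc
  obtain ⟨C, hC⟩ := hKcp.exists_bound_of_continuousOn
    (hv.mono (by intro p hp; exact ⟨hp.1, hp.2.1⟩))
  have key : ContinuousWithinAt (fun t => ∫ x in (-L)..L, ‖v x t‖^2) (Set.Ici 0) t₀ := by
    apply intervalIntegral.continuousWithinAt_of_dominated_interval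
      (bound := fun _ => C^2) (μ := volume)
    · -- measurability eventually
      filter_upwards [self_mem_nhdsWithin] with t ht
      have hc : ContinuousOn (fun x => ‖v x t‖^2) (Set.Icc (-L) L) :=
        ((slice_contOn hL hv ht).norm.pow 2)
      rw [huIoc]
      exact (hc.mono Set.Ioc_subset_Icc_self).aestronglyMeasurable measurableSet_Ioc
    · -- bound eventually
      filter_upwards [Filter.inter_mem (mem_nhdsWithin_of_mem_nhds (Iio_mem_nhds (by linarith : t₀ < t₀+1)))
        self_mem_nhdsWithin] with t ht
      obtain ⟨ht1, ht2⟩ := ht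
      refine Filter.Eventually.of_forall (fun x hx => ?_)
      have hx' : x ∈ Set.Icc (-L) L := by
        rw [huIoc] at hx
        exact Set.Ioc_subset_Icc_self hx
      have := hC (x, t) ⟨hx', ⟨ht2, le_of_lt ht1⟩⟩
      have hn : (0:ℝ) ≤ ‖v x t‖ := norm_nonneg _
      have : ‖v x t‖ ≤ C := this
      calc ‖‖v x t‖^2‖ = ‖v x t‖^2 := by
            rw [Real.norm_eq_abs, abs_of_nonneg (by positivity)]
        _ ≤ C^2 := by nlinarith
    · exact intervalIntegrable_const
    · refine Filter.Eventually.of_forall (fun x hx => ?_)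
      have hx' : x ∈ Set.Icc (-L) L := by
        rw [huIoc] at hx
        exact Set.Ioc_subset_Icc_self hx
      have hcw : ContinuousWithinAt (fun t => v x t) (Set.Ici 0) t₀ := by
        have hmk : ContinuousWithinAt (fun t : ℝ => ((x, t) : ℝ × ℝ)) (Set.Ici 0) t₀ :=
          (continuous_const.prodMk continuous_id).continuousWithinAt
        exact (hv (x, t₀) ⟨hx', ht₀⟩).comp hmk (fun t ht => ⟨hx', ht⟩)
      exact (hcw.norm.pow 2)
  exact key
end helpers

section deriv
variable {L : ℝ}

lemma M_hasDeriv (hL : 0 < L) {u ut : ℝ → ℝ → ℂ}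
    (hu_cont : ContinuousOn (fun p : ℝ × ℝ => u p.1 p.2) (Set.Icc (-L) L ×ˢ Set.Ici 0))
    (hut_cont : ContinuousOn (fun p : ℝ × ℝ => ut p.1 p.2) (Set.Icc (-L) L ×ˢ Set.Ici 0))
    (hut : ∀ x ∈ Set.Icc (-L) L, ∀ t > (0:ℝ), HasDerivAt (fun s => u x s) (ut x t) t)
    {t₀ : ℝ} (ht₀ : 0 < t₀) :
    HasDerivAt (fun t => ∫ x in (-L)..L, ‖u x t‖^2)
      (∫ x in (-L)..L, 2*((u x t₀).re*(ut x t₀).re + (u x t₀).im*(ut x t₀).im)) t₀ := by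
  have hll : -L ≤ L := by linarith
  have huIoc : Set.uIoc (-L) L = Set.Ioc (-L) L := Set.uIoc_of_le hll
  have hKcp : IsCompact (Set.Icc (-L) L ×ˢ Set.Icc (t₀/2) (t₀/2+t₀)) :=
    isCompact_Icc.prod isCompact_Icc
  have hKsub : Set.Icc (-L) L ×ˢ Set.Icc (t₀/2) (t₀/2+t₀) ⊆ Set.Icc (-L) L ×ˢ Set.Ici 0 :=
    fun p hp => ⟨hp.1, le_trans (by linarith) hp.2.1⟩
  obtain ⟨C1, hC1⟩ := hKcp.exists_bound_of_continuousOn (hu_cont.mono hKsub)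
  obtain ⟨C2, hC2⟩ := hKcp.exists_bound_of_continuousOn (hut_cont.mono hKsub)
  have hball : ∀ t ∈ Metric.ball t₀ (t₀/2), 0 < t ∧ t ∈ Set.Icc (t₀/2) (t₀/2+t₀) := by
    intro t ht
    rw [Metric.mem_ball, Real.dist_eq, abs_lt] at ht
    exact ⟨by linarith [ht.1], ⟨by linarith [ht.1], by linarith [ht.2]⟩⟩
  have main := intervalIntegral.hasDerivAt_integral_of_dominated_loc_of_deriv_le
    (F := fun t x => ‖u x t‖^2)
    (F' := fun t x => 2*((u x t).re*(ut x t).re + (u x t).im*(ut x t).im))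
    (x₀ := t₀) (a := -L) (b := L) (μ := volume)
    (bound := fun _ => 2*(|C1| * |C2| + |C1| * |C2|)) (Metric.ball_mem_nhds t₀ (half_pos ht₀))
    ?_ ?_ ?_ ?_ intervalIntegrable_const ?_
  · exact main.2
  · -- measurability eventually
    filter_upwards [Ioi_mem_nhds ht₀] with t ht
    have hc : ContinuousOn (fun x => ‖u x t‖^2) (Set.Icc (-L) L) :=
      ((slice_contOn hL hu_cont (le_of_lt ht)).norm.pow 2)
    rw [huIoc]
    exact (hc.mono Set.Ioc_subset_Icc_self).aestronglyMeasurable measurableSet_Ioc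
  · -- integrability at t₀
    apply ContinuousOn.intervalIntegrable
    rw [Set.uIcc_of_le hll]
    exact ((slice_contOn hL hu_cont (le_of_lt ht₀)).norm.pow 2)
  · -- measurability of F' t₀
    have hcu := slice_contOn hL hu_cont (le_of_lt ht₀)
    have hcut := slice_contOn hL hut_cont (le_of_lt ht₀)
    have hc : ContinuousOn (fun x => 2*((u x t₀).re*(ut x t₀).re + (u x t₀).im*(ut x t₀).im))
        (Set.Icc (-L) L) := by
      apply ContinuousOn.mul continuousOn_const
      exact (((Complex.continuous_re.comp_continuousOn hcu).mul
          (Complex.continuous_re.comp_continuousOn hcut)).add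
        ((Complex.continuous_im.comp_continuousOn hcu).mul
          (Complex.continuous_im.comp_continuousOn hcut)))
    rw [huIoc]
    exact (hc.mono Set.Ioc_subset_Icc_self).aestronglyMeasurable measurableSet_Ioc
  · -- bound
    refine Filter.Eventually.of_forall (fun x hx => fun t ht => ?_)
    have hx' : x ∈ Set.Icc (-L) L := by
      rw [huIoc] at hx; exact Set.Ioc_subset_Icc_self hx
    obtain ⟨htpos, htIcc⟩ := hball t ht
    have hu1 : ‖u x t‖ ≤ |C1| := le_trans (hC1 (x,t) ⟨hx', htIcc⟩) (le_abs_self _)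
    have hu2 : ‖ut x t‖ ≤ |C2| := le_trans (hC2 (x,t) ⟨hx', htIcc⟩) (le_abs_self _)
    have h1 : |(u x t).re| ≤ ‖u x t‖ := Complex.abs_re_le_norm _
    have h2 : |(u x t).im| ≤ ‖u x t‖ := Complex.abs_im_le_norm _
    have h3 : |(ut x t).re| ≤ ‖ut x t‖ := Complex.abs_re_le_norm _
    have h4 : |(ut x t).im| ≤ ‖ut x t‖ := Complex.abs_im_le_norm _
    rw [Real.norm_eq_abs]
    have e1 : |(u x t).re*(ut x t).re| ≤ |C1| * |C2| := by
      rw [abs_mul]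
      exact mul_le_mul (le_trans h1 hu1) (le_trans h3 hu2) (abs_nonneg _)
        (le_trans (abs_nonneg _) (le_trans h1 hu1))
    have e2 : |(u x t).im*(ut x t).im| ≤ |C1| * |C2| := by
      rw [abs_mul]
      exact mul_le_mul (le_trans h2 hu1) (le_trans h4 hu2) (abs_nonneg _)
        (le_trans (abs_nonneg _) (le_trans h2 hu1))
    calc |2*((u x t).re*(ut x t).re + (u x t).im*(ut x t).im)|
        ≤ 2*(|(u x t).re*(ut x t).re| + |(u x t).im*(ut x t).im|) := by
          rw [abs_mul, abs_two]
          exact mul_le_mul_of_nonneg_left (abs_add_le _ _) (by norm_num)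
      _ ≤ 2*(|C1| * |C2| + |C1| * |C2|) := by linarith
  · -- differentiability
    refine Filter.Eventually.of_forall (fun x hx => fun t ht => ?_)
    have hx' : x ∈ Set.Icc (-L) L := by
      rw [huIoc] at hx; exact Set.Ioc_subset_Icc_self hx
    exact hd_normsq (hut x hx' t (hball t ht).1)
end deriv

lemma R_bound {L γ : ℝ} (hL : 0 < L) (hγ : 0 < γ) {U UT X XX F : ℝ → ℂ}
    (hU : ContinuousOn U (Set.Icc (-L) L))
    (hUT : ContinuousOn UT (Set.Icc (-L) L))
    (hX : ContinuousOn X (Set.Icc (-L) L))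
    (hXX : ContinuousOn XX (Set.Icc (-L) L))
    (hdX : ∀ x ∈ Set.Icc (-L) L, HasDerivAt U (X x) x)
    (hdXX : ∀ x ∈ Set.Icc (-L) L, HasDerivAt X (XX x) x)
    (hF : ContinuousOn F (Set.Icc (-L) L))
    (hPDE : ∀ x ∈ Set.Ioo (-L) L,
      Complex.I * UT x + (1/2 : ℂ) * XX x + (‖U x‖ : ℂ)^2 * U x
        = F x - Complex.I * (γ : ℂ) * U x)
    (hB1 : U (-L) = 0) (hB2 : U L = 0) :
    (∫ x in (-L)..L, 2*((U x).re*(UT x).re + (U x).im*(UT x).im))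
      ≤ (∫ x in (-L)..L, 2*(‖U x‖*‖F x‖)) - 2*γ*(∫ x in (-L)..L, ‖U x‖^2) := by
  have hll : -L ≤ L := by linarith
  have huIcc : Set.uIcc (-L) L = Set.Icc (-L) L := Set.uIcc_of_le hll
  have huIoc : Set.uIoc (-L) L = Set.Ioc (-L) L := Set.uIoc_of_le hll
  set W : ℝ → ℝ := fun x => (U x).re*(XX x).im - (U x).im*(XX x).re with hW
  set w : ℝ → ℝ := fun x => (U x).re*(X x).im - (U x).im*(X x).re with hw
  set q : ℝ → ℝ := fun x => 2*((U x).re*(F x).im - (U x).im*(F x).re) with hq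
  -- continuity facts
  have hUre := Complex.continuous_re.comp_continuousOn hU
  have hUim := Complex.continuous_im.comp_continuousOn hU
  have hXXre := Complex.continuous_re.comp_continuousOn hXX
  have hXXim := Complex.continuous_im.comp_continuousOn hXX
  have hFre := Complex.continuous_re.comp_continuousOn hF
  have hFim := Complex.continuous_im.comp_continuousOn hF
  have hWc : ContinuousOn W (Set.Icc (-L) L) := (hUre.mul hXXim).sub (hUim.mul hXXre)
  have hqc : ContinuousOn q (Set.Icc (-L) L) :=
    continuousOn_const.mul ((hUre.mul hFim).sub (hUim.mul hFre))
  have hU2c : ContinuousOn (fun x => ‖U x‖^2) (Set.Icc (-L) L) := hU.norm.pow 2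
  have hrc : ContinuousOn (fun x => 2*((U x).re*(UT x).re + (U x).im*(UT x).im))
      (Set.Icc (-L) L) := by
    have hUTre := Complex.continuous_re.comp_continuousOn hUT
    have hUTim := Complex.continuous_im.comp_continuousOn hUT
    exact continuousOn_const.mul ((hUre.mul hUTre).add (hUim.mul hUTim))
  -- step: derivative of w
  have hdw : ∀ x ∈ Set.uIcc (-L) L, HasDerivAt w (W x) x := by
    intro x hx
    rw [huIcc] at hx
    have h1 := ((hd_re (hdX x hx)).mul (hd_im (hdXX x hx))).sub
      ((hd_im (hdX x hx)).mul (hd_re (hdXX x hx)))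
    exact h1.congr_deriv (by simp only [hW]; ring)
  -- step: FTC gives ∫ W = 0
  have hWint0 : (∫ x in (-L)..L, W x) = 0 := by
    rw [intervalIntegral.integral_eq_sub_of_hasDerivAt hdw
      (ContinuousOn.intervalIntegrable (by rw [huIcc]; exact hWc))]
    simp [hw, hB1, hB2]
  -- pointwise PDE identity on Ioo
  have hpt : ∀ x ∈ Set.Ioo (-L) L,
      2*((U x).re*(UT x).re + (U x).im*(UT x).im) = q x - 2*γ*‖U x‖^2 - W x := by
    intro x hx
    have h := hPDE x hx
    have hn : ‖U x‖^2 = (U x).re^2 + (U x).im^2 := by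
      rw [← Complex.normSq_eq_norm_sq, Complex.normSq_apply]; ring
    have hsq : ((‖U x‖:ℂ))^2 = ((‖U x‖^2 : ℝ):ℂ) := by push_cast; ring
    rw [hsq] at h
    have h2 : (2:ℂ) * UT x = -2*Complex.I*F x - 2*(γ:ℂ)*U x + Complex.I * XX x
        + 2*Complex.I*((‖U x‖^2 : ℝ):ℂ)*U x := by
      linear_combination (-2*Complex.I) * h + (2*UT x + 2*(γ:ℂ)*U x) * Complex.I_sq
    have hre := congrArg Complex.re h2
    have him := congrArg Complex.im h2
    simp only [Complex.add_re, Complex.add_im, Complex.mul_re, Complex.mul_im,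
      Complex.sub_re, Complex.sub_im, Complex.I_re, Complex.I_im, Complex.neg_re,
      Complex.neg_im, Complex.ofReal_re, Complex.ofReal_im, Complex.re_ofNat,
      Complex.im_ofNat] at hre him
    simp only [hq, hW]
    linear_combination (U x).re * hre + (U x).im * him + 2*γ*hn
  -- rewrite the integral
  have hcongr : (∫ x in (-L)..L, 2*((U x).re*(UT x).re + (U x).im*(UT x).im))
      = ∫ x in (-L)..L, (q x - 2*γ*‖U x‖^2 - W x) := by
    apply intervalIntegral.integral_congr_ae
    have hL' : ∀ᵐ x : ℝ ∂volume, x ≠ L := by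
      refine (MeasureTheory.ae_iff).2 ?_
      simpa using measure_singleton (L : ℝ)
    filter_upwards [hL'] with x hxL hx
    rw [huIoc] at hx
    exact hpt x ⟨hx.1, lt_of_le_of_ne hx.2 hxL⟩
  rw [hcongr]
  have hint_q : IntervalIntegrable q volume (-L) L :=
    ContinuousOn.intervalIntegrable (by rw [huIcc]; exact hqc)
  have hint_U2 : IntervalIntegrable (fun x => 2*γ*‖U x‖^2) volume (-L) L :=
    ContinuousOn.intervalIntegrable (by rw [huIcc]; exact continuousOn_const.mul hU2c)
  have hint_W : IntervalIntegrable W volume (-L) L :=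
    ContinuousOn.intervalIntegrable (by rw [huIcc]; exact hWc)
  rw [intervalIntegral.integral_sub (hint_q.sub hint_U2) hint_W,
    intervalIntegral.integral_sub hint_q hint_U2, hWint0]
  have hcm : (∫ x in (-L)..L, 2*γ*‖U x‖^2) = 2*γ*∫ x in (-L)..L, ‖U x‖^2 :=
    intervalIntegral.integral_const_mul _ _
  have hq_le : (∫ x in (-L)..L, q x) ≤ ∫ x in (-L)..L, 2*(‖U x‖*‖F x‖) := by
    apply intervalIntegral.integral_mono_on hll hint_q
    · exact ContinuousOn.intervalIntegrable
        (by rw [huIcc]; exact continuousOn_const.mul (hU.norm.mul hF.norm))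
    · intro x hx
      have h1 := Complex.abs_im_le_norm ((starRingEnd ℂ) (U x) * F x)
      rw [norm_mul, Complex.norm_conj] at h1
      have h2 : ((starRingEnd ℂ) (U x) * F x).im = (U x).re*(F x).im - (U x).im*(F x).re := by
        simp [Complex.mul_im, Complex.conj_re, Complex.conj_im]; ring
      have h3 : (U x).re*(F x).im - (U x).im*(F x).re ≤ ‖U x‖ * ‖F x‖ := by
        rw [← h2]
        calc ((starRingEnd ℂ) (U x) * F x).im ≤ |((starRingEnd ℂ) (U x) * F x).im| := le_abs_self _
          _ ≤ ‖U x‖ * ‖F x‖ := h1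
      simp only [hq]
      linarith
  linarith [hq_le, hcm]

end NLSHelpers


/-- Unconditional time-decay of the `L²` norm (Proposition 2.2,
case 1): for a classical solution of the damped driven NLS on
`(-L,L) × (0,∞)` with Dirichlet boundary conditions, a time weight `φ > 0`
with `|φ'| ≤ δ₂`, and for a driver with `∫₀^∞∫φ²|f|² < ∞` and
`∫₀^∞∫|u|² < ∞`, one has `∫|u(·,t)|² ≤ 2K₀/φ(t)²` for all `t > 0`, where
`K₀ = (1/2)φ(0)²∫|u₀|² + (1/γ)∫₀^∞∫φ²|f|² + (δ₂²/γ)∫₀^∞∫|u|²`. -/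
theorem unconditional_time_decay_L2
    (L γ δ₂ : ℝ) (hL : 0 < L) (hγ : 0 < γ) (hδ₂ : 0 < δ₂)
    (φ φ' : ℝ → ℝ)
    (hφpos : ∀ t ≥ (0:ℝ), 0 < φ t)
    (hφd : ∀ t ≥ (0:ℝ), HasDerivAt φ (φ' t) t)
    (hφ'c : ContinuousOn φ' (Set.Ici 0))
    (hφ'b : ∀ t ≥ (0:ℝ), |φ' t| ≤ δ₂)
    (f : ℝ → ℝ → ℂ)
    (hf : ContinuousOn (fun p : ℝ × ℝ => f p.1 p.2) (Set.univ ×ˢ Set.Ici 0))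
    (u ut ux uxx : ℝ → ℝ → ℂ)
    (hu_cont : ContinuousOn (fun p : ℝ × ℝ => u p.1 p.2) (Set.Icc (-L) L ×ˢ Set.Ici 0))
    (hut_cont : ContinuousOn (fun p : ℝ × ℝ => ut p.1 p.2) (Set.Icc (-L) L ×ˢ Set.Ici 0))
    (hux_cont : ContinuousOn (fun p : ℝ × ℝ => ux p.1 p.2) (Set.Icc (-L) L ×ˢ Set.Ici 0))
    (huxx_cont : ContinuousOn (fun p : ℝ × ℝ => uxx p.1 p.2) (Set.Icc (-L) L ×ˢ Set.Ici 0))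
    (hut : ∀ x ∈ Set.Icc (-L) L, ∀ t > (0:ℝ), HasDerivAt (fun s => u x s) (ut x t) t)
    (hux : ∀ x ∈ Set.Icc (-L) L, ∀ t ≥ (0:ℝ), HasDerivAt (fun y => u y t) (ux x t) x)
    (huxx : ∀ x ∈ Set.Icc (-L) L, ∀ t ≥ (0:ℝ), HasDerivAt (fun y => ux y t) (uxx x t) x)
    (hPDE : ∀ x ∈ Set.Ioo (-L) L, ∀ t > (0:ℝ),
      Complex.I * ut x t + (1/2 : ℂ) * uxx x t + (‖u x t‖ : ℂ)^2 * u x t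
        = f x t - Complex.I * (γ : ℂ) * u x t)
    (hBC : ∀ t ≥ (0:ℝ), u (-L) t = 0 ∧ u L t = 0)
    (hfint : IntegrableOn (fun t => ∫ x in (-L)..L, (φ t)^2 * ‖f x t‖^2) (Set.Ioi 0))
    (huint : IntegrableOn (fun t => ∫ x in (-L)..L, ‖u x t‖^2) (Set.Ioi 0))
    (K₀ : ℝ)
    (hK₀ : K₀ = (1/2) * (φ 0)^2 * (∫ x in (-L)..L, ‖u x 0‖^2)
        + (1/γ) * (∫ t in Set.Ioi (0:ℝ), ∫ x in (-L)..L, (φ t)^2 * ‖f x t‖^2)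
        + (δ₂^2/γ) * (∫ t in Set.Ioi (0:ℝ), ∫ x in (-L)..L, ‖u x t‖^2)) :
    ∀ t > (0:ℝ), (∫ x in (-L)..L, ‖u x t‖^2) ≤ 2 * K₀ / (φ t)^2 := by
  intro t ht
  have hll : -L ≤ L := by linarith
  -- abbreviations (plain `have`-style definitions)
  let M : ℝ → ℝ := fun s => ∫ x in (-L)..L, ‖u x s‖^2
  let ψ : ℝ → ℝ := fun s => ∫ x in (-L)..L, ‖f x s‖^2
  let Q : ℝ → ℝ := fun s => ∫ x in (-L)..L, 2*(‖u x s‖*‖f x s‖)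
  let R : ℝ → ℝ := fun s => ∫ x in (-L)..L,
    2*((u x s).re*(ut x s).re + (u x s).im*(ut x s).im)
  let g : ℝ → ℝ := fun s => (δ₂^2/γ) * M s + (1/γ) * ((φ s)^2 * ψ s)
  let E : ℝ → ℝ := fun s => (φ s)^2 * M s
  have hf' : ContinuousOn (fun p : ℝ × ℝ => f p.1 p.2) (Set.Icc (-L) L ×ˢ Set.Ici 0) :=
    hf.mono (Set.prod_mono (Set.subset_univ _) subset_rfl)
  -- basic positivity
  have hMnn : ∀ s : ℝ, 0 ≤ M s := fun s =>
    intervalIntegral.integral_nonneg hll (fun x _ => by positivity)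
  have hψnn : ∀ s : ℝ, 0 ≤ ψ s := fun s =>
    intervalIntegral.integral_nonneg hll (fun x _ => by positivity)
  -- continuity
  have hMc : ContinuousOn M (Set.Ici 0) := paramInt_contOn hL hu_cont
  have hψc : ContinuousOn ψ (Set.Ici 0) := paramInt_contOn hL hf'
  have hφc : ContinuousOn φ (Set.Ici 0) :=
    fun s hs => (hφd s hs).continuousAt.continuousWithinAt
  have hgc : ContinuousOn g (Set.Ici 0) :=
    (continuousOn_const.mul hMc).add (continuousOn_const.mul ((hφc.pow 2).mul hψc))
  have hgnn : ∀ s : ℝ, 0 ≤ g s := by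
    intro s
    have h1 : 0 ≤ δ₂^2/γ := by positivity
    have h2 : 0 ≤ (1:ℝ)/γ := by positivity
    have := hMnn s; have := hψnn s
    have h3 : 0 ≤ (φ s)^2 * ψ s := mul_nonneg (sq_nonneg _) (hψnn s)
    have h4 := mul_nonneg h1 (hMnn s)
    have h5 := mul_nonneg h2 h3
    simpa [g] using add_nonneg h4 h5
  -- derivative of M
  have hMd : ∀ s > (0:ℝ), HasDerivAt M (R s) s := fun s hs =>
    M_hasDeriv hL hu_cont hut_cont hut hs
  -- the energy inequality for R
  have hRb : ∀ s > (0:ℝ), R s ≤ Q s - 2*γ*M s := by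
    intro s hs
    exact R_bound hL hγ
      (slice_contOn hL hu_cont hs.le) (slice_contOn hL hut_cont hs.le)
      (slice_contOn hL hux_cont hs.le) (slice_contOn hL huxx_cont hs.le)
      (fun x hx => hux x hx s hs.le) (fun x hx => huxx x hx s hs.le)
      (slice_contOn hL hf' hs.le)
      (fun x hx => hPDE x hx s hs)
      (hBC s hs.le).1 (hBC s hs.le).2
  -- Young inequality for the integrand
  have hyoung : ∀ a b : ℝ, 2*(a*b) ≤ γ*a^2 + (1/γ)*b^2 := by
    intro a b
    have h1 : 0 ≤ (γ*a - b)^2 / γ := div_nonneg (sq_nonneg _) hγ.le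
    have h2 : (γ*a - b)^2 / γ = γ*a^2 - 2*(a*b) + (1/γ)*b^2 := by
      field_simp; ring
    rw [h2] at h1; linarith
  have hQle : ∀ s ≥ (0:ℝ), Q s ≤ γ*M s + (1/γ)*ψ s := by
    intro s hs
    have hint1 : IntervalIntegrable (fun x => 2*(‖u x s‖*‖f x s‖)) volume (-L) L := by
      apply ContinuousOn.intervalIntegrable
      rw [Set.uIcc_of_le hll]
      exact continuousOn_const.mul ((slice_contOn hL hu_cont hs).norm.mul
        (slice_contOn hL hf' hs).norm)
    have hint2 : IntervalIntegrable (fun x => γ*‖u x s‖^2 + (1/γ)*‖f x s‖^2) volume (-L) L := by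
      apply ContinuousOn.intervalIntegrable
      rw [Set.uIcc_of_le hll]
      exact (continuousOn_const.mul ((slice_contOn hL hu_cont hs).norm.pow 2)).add
        (continuousOn_const.mul ((slice_contOn hL hf' hs).norm.pow 2))
    have hmono := intervalIntegral.integral_mono_on hll hint1 hint2
      (fun x _ => hyoung ‖u x s‖ ‖f x s‖)
    have hsplit : (∫ x in (-L)..L, (γ*‖u x s‖^2 + (1/γ)*‖f x s‖^2))
        = γ*M s + (1/γ)*ψ s := by
      have i1 : IntervalIntegrable (fun x => γ*‖u x s‖^2) volume (-L) L := by
        apply ContinuousOn.intervalIntegrable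
        rw [Set.uIcc_of_le hll]
        exact continuousOn_const.mul ((slice_contOn hL hu_cont hs).norm.pow 2)
      have i2 : IntervalIntegrable (fun x => (1/γ)*‖f x s‖^2) volume (-L) L := by
        apply ContinuousOn.intervalIntegrable
        rw [Set.uIcc_of_le hll]
        exact continuousOn_const.mul ((slice_contOn hL hf' hs).norm.pow 2)
      rw [intervalIntegral.integral_add i1 i2, intervalIntegral.integral_const_mul,
        intervalIntegral.integral_const_mul]
    rw [hsplit] at hmono
    exact hmono
  -- derivative of E and the key differential inequality
  have hEd : ∀ s > (0:ℝ), HasDerivAt E (2*φ s*φ' s*M s + (φ s)^2*(R s)) s := by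
    intro s hs
    have hp : HasDerivAt (fun y => (φ y)^2) (2*φ s*φ' s) s := by
      have := (hφd s hs.le).pow 2
      exact this.congr_deriv (by ring)
    have h2 := hp.mul (hMd s hs)
    exact h2
  have hE'le : ∀ s > (0:ℝ), 2*φ s*φ' s*M s + (φ s)^2*(R s) ≤ g s := by
    intro s hs
    have hb1 : 2*(φ s)*(φ' s) ≤ γ*(φ s)^2 + δ₂^2/γ := by
      have h1 : 0 ≤ (γ*φ s - φ' s)^2 / γ := div_nonneg (sq_nonneg _) hγ.le
      have h2 : (γ*φ s - φ' s)^2 / γ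
          = γ*(φ s)^2 - 2*(φ s)*(φ' s) + (φ' s)^2/γ := by
        field_simp; ring
      rw [h2] at h1
      have h3 : (φ' s)^2 ≤ δ₂^2 := by
        have := hφ'b s hs.le
        nlinarith [abs_nonneg (φ' s), sq_abs (φ' s)]
      have h4 : (φ' s)^2/γ ≤ δ₂^2/γ := by gcongr
      linarith
    have hm := hMnn s
    have h5 : 2*φ s*φ' s*M s ≤ (γ*(φ s)^2 + δ₂^2/γ)*M s := by
      have := mul_le_mul_of_nonneg_right hb1 hm
      calc 2*φ s*φ' s*M s = (2*(φ s)*(φ' s))*M s := by ring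
        _ ≤ (γ*(φ s)^2 + δ₂^2/γ)*M s := this
    have h6 : (φ s)^2*(R s) ≤ (φ s)^2*(Q s - 2*γ*M s) :=
      mul_le_mul_of_nonneg_left (hRb s hs) (sq_nonneg _)
    have h7 : (φ s)^2*(Q s) ≤ (φ s)^2*(γ*M s + (1/γ)*ψ s) :=
      mul_le_mul_of_nonneg_left (hQle s hs.le) (sq_nonneg _)
    have hgval : g s = (δ₂^2/γ) * M s + (1/γ) * ((φ s)^2 * ψ s) := rfl
    rw [hgval]
    nlinarith [h5, h6, h7]
  -- Gronwall-type comparison on [0, t]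
  let G : ℝ → ℝ := fun s => ∫ τ in (0:ℝ)..s, g τ
  have hgint_Icc : IntegrableOn g (Set.Icc 0 t) :=
    (hgc.mono Set.Icc_subset_Ici_self).integrableOn_compact isCompact_Icc
  have hGc : ContinuousOn G (Set.Icc 0 t) := by
    have h := intervalIntegral.continuousOn_primitive_interval (a := 0) (b := t)
      (f := g) (μ := volume) (by rw [Set.uIcc_of_le ht.le]; exact hgint_Icc)
    rw [Set.uIcc_of_le ht.le] at h
    exact h
  have hEc : ContinuousOn E (Set.Icc 0 t) := by
    apply ContinuousOn.mul
    · exact (hφc.mono Set.Icc_subset_Ici_self).pow 2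
    · exact hMc.mono Set.Icc_subset_Ici_self
  have hderiv : ∀ s ∈ Set.Ioo (0:ℝ) t,
      HasDerivAt (fun y => E y - G y) (2*φ s*φ' s*M s + (φ s)^2*(R s) - g s) s := by
    intro s hs
    have hGd : HasDerivAt G (g s) s := by
      apply intervalIntegral.integral_hasDerivAt_right
      · apply ContinuousOn.intervalIntegrable
        rw [Set.uIcc_of_le hs.1.le]
        exact hgc.mono (Set.Icc_subset_Ici_self)
      · exact ⟨Set.Ioi 0, Ioi_mem_nhds hs.1,
          (hgc.mono Set.Ioi_subset_Ici_self).aestronglyMeasurable measurableSet_Ioi⟩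
      · exact hgc.continuousAt (Ici_mem_nhds hs.1)
    exact (hEd s hs.1).sub hGd
  have hanti : AntitoneOn (fun y => E y - G y) (Set.Icc 0 t) := by
    apply antitoneOn_of_deriv_nonpos (convex_Icc 0 t) (hEc.sub hGc)
    · intro s hs
      rw [interior_Icc] at hs
      exact (hderiv s hs).differentiableAt.differentiableWithinAt
    · intro s hs
      rw [interior_Icc] at hs
      change deriv (fun y => E y - G y) s ≤ 0
      rw [(hderiv s hs).deriv]
      have := hE'le s hs.1
      linarith
  have hEG : E t - G t ≤ E 0 - G 0 :=
    hanti (Set.left_mem_Icc.2 ht.le) (Set.right_mem_Icc.2 ht.le) ht.le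
  have hG0 : G 0 = 0 := intervalIntegral.integral_same
  -- integrability of g on (0,∞) and tail bound
  have hfint' : IntegrableOn (fun s => (φ s)^2 * ψ s) (Set.Ioi 0) := by
    have heq : (fun s => (φ s)^2 * ψ s)
        = fun s => ∫ x in (-L)..L, (φ s)^2 * ‖f x s‖^2 := by
      funext s
      exact (intervalIntegral.integral_const_mul _ _).symm
    rw [heq]
    exact hfint
  have hgint : IntegrableOn g (Set.Ioi 0) := by
    have h1 : IntegrableOn (fun s => (δ₂^2/γ) * M s) (Set.Ioi 0) := huint.const_mul _
    have h2 : IntegrableOn (fun s => (1/γ) * ((φ s)^2 * ψ s)) (Set.Ioi 0) :=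
      hfint'.const_mul _
    exact h1.add h2
  have hGle : G t ≤ ∫ s in Set.Ioi (0:ℝ), g s := by
    have h1 : G t = ∫ s in Set.Ioc (0:ℝ) t, g s := intervalIntegral.integral_of_le ht.le
    rw [h1]
    apply MeasureTheory.setIntegral_mono_set hgint
    · exact Filter.Eventually.of_forall (fun s => hgnn s)
    · exact Filter.Eventually.of_forall Set.Ioc_subset_Ioi_self
  have hsplit : (∫ s in Set.Ioi (0:ℝ), g s)
      = (δ₂^2/γ) * (∫ s in Set.Ioi (0:ℝ), M s)
        + (1/γ) * (∫ s in Set.Ioi (0:ℝ), (φ s)^2 * ψ s) := by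
    rw [MeasureTheory.integral_add (huint.const_mul _) (hfint'.const_mul _),
      MeasureTheory.integral_const_mul, MeasureTheory.integral_const_mul]
  -- identify the integrals in K₀
  have hA : (∫ s in Set.Ioi (0:ℝ), ∫ x in (-L)..L, (φ s)^2 * ‖f x s‖^2)
      = ∫ s in Set.Ioi (0:ℝ), (φ s)^2 * ψ s := by
    congr 1
    funext s
    exact (intervalIntegral.integral_const_mul _ _)
  have hAnn : 0 ≤ ∫ s in Set.Ioi (0:ℝ), (φ s)^2 * ψ s :=
    MeasureTheory.setIntegral_nonneg measurableSet_Ioi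
      (fun s _ => mul_nonneg (sq_nonneg _) (hψnn s))
  have hBnn : 0 ≤ ∫ s in Set.Ioi (0:ℝ), M s :=
    MeasureTheory.setIntegral_nonneg measurableSet_Ioi (fun s _ => hMnn s)
  -- put everything together
  have hEt : E t ≤ 2 * K₀ := by
    have h1 : E t ≤ E 0 + G t := by
      have := hEG; rw [hG0] at this; linarith
    have h2 : E t ≤ E 0 + (δ₂^2/γ) * (∫ s in Set.Ioi (0:ℝ), M s)
        + (1/γ) * (∫ s in Set.Ioi (0:ℝ), (φ s)^2 * ψ s) := by
      have := le_trans h1 (by linarith [hGle, hsplit.le] :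
        E 0 + G t ≤ E 0 + (δ₂^2/γ) * (∫ s in Set.Ioi (0:ℝ), M s)
          + (1/γ) * (∫ s in Set.Ioi (0:ℝ), (φ s)^2 * ψ s))
      exact this
    have hE0 : E 0 = (φ 0)^2 * M 0 := rfl
    have hK : 2 * K₀ = (φ 0)^2 * M 0
        + (2/γ) * (∫ s in Set.Ioi (0:ℝ), (φ s)^2 * ψ s)
        + (2*δ₂^2/γ) * (∫ s in Set.Ioi (0:ℝ), M s) := by
      rw [hK₀, hA]
      have hBeq : (∫ s in Set.Ioi (0:ℝ), ∫ x in (-L)..L, ‖u x s‖^2)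
          = ∫ s in Set.Ioi (0:ℝ), M s := rfl
      rw [hBeq]
      ring
    rw [hK]
    have c1 : (1/γ) * (∫ s in Set.Ioi (0:ℝ), (φ s)^2 * ψ s)
        ≤ (2/γ) * (∫ s in Set.Ioi (0:ℝ), (φ s)^2 * ψ s) := by
      apply mul_le_mul_of_nonneg_right _ hAnn
      rw [div_le_div_iff₀ hγ hγ]; nlinarith
    have c2 : (δ₂^2/γ) * (∫ s in Set.Ioi (0:ℝ), M s)
        ≤ (2*δ₂^2/γ) * (∫ s in Set.Ioi (0:ℝ), M s) := by
      apply mul_le_mul_of_nonneg_right _ hBnn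
      rw [div_le_div_iff₀ hγ hγ]; nlinarith
    rw [hE0] at h2
    linarith
  -- conclude
  have hφt : 0 < (φ t)^2 := by
    have := hφpos t ht.le; positivity
  have hfinal : M t ≤ 2 * K₀ / (φ t)^2 := by
    rw [le_div_iff₀ hφt]
    have hEt' : (φ t)^2 * M t ≤ 2 * K₀ := hEt
    linarith [hEt']
  exact hfinal
end
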